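/- arXiv:1403.5368 — 6 statements merged into one kernel-verified Lean document; each statement's English description precedes it below -/
import Mathlib

section
/- Let $1 \le p \le q < \infty$ and $K \in [0,\infty)$. There exists a constant $C > 0$ such that for all $t > 0$, all Borel sets $E, F \subseteq \mathbb{R}$ and all $f \in L^p(\mathbb{R},\mathbb{C})$: $\|\chi_F \cdot (k_t * (\chi_E f))\|_{L^q} \le C\, t^{1/q - 1/p} \left(1 + \frac{d(E,F)}{t}\right)^{-K} \|\chi_E f\|_{L^p}$. -/
open MeasureTheory ENNReal

/-- The one-dimensional resolvent kernel `k_t(x) = (1/(2t)) e^{-|x|/t}`. -/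
noncomputable def resKernel (t x : ℝ) : ℝ := (1 / (2 * t)) * Real.exp (-|x| / t)

/-- The distance `d(E,F) = inf {dist x y | x ∈ E, y ∈ F}` between two sets. -/
noncomputable def setDist {α : Type*} [PseudoMetricSpace α] (E F : Set α) : ℝ :=
  sInf (Set.image2 dist E F)

open Real Set

lemma lint_neg_eq (g : ℝ → ℝ≥0∞) (hg : Measurable g) : ∫⁻ z : ℝ, g (-z) = ∫⁻ z, g z := by
  rw [← lintegral_map hg measurable_neg, Measure.map_neg_eq_self]

lemma lint_sub_left_eq (g : ℝ → ℝ≥0∞) (hg : Measurable g) (x : ℝ) :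
    ∫⁻ y : ℝ, g (x - y) = ∫⁻ y, g y := by
  simp_rw [sub_eq_add_neg]
  exact (lint_neg_eq (fun z => g (x + z)) (hg.comp (measurable_const_add x))).trans
    (lintegral_add_left_eq_self g x)

/-- `∫ exp(-(a|z|)) dz = 2/a` as a lower Lebesgue integral. -/
lemma lint_exp_abs {a : ℝ} (ha : 0 < a) :
    ∫⁻ z : ℝ, ENNReal.ofReal (rexp (-(a * |z|))) = ENNReal.ofReal (2 / a) := by
  have hmeas : Measurable fun z : ℝ => ENNReal.ofReal (rexp (-(a * |z|))) := by
    apply Measurable.ennreal_ofReal; fun_prop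
  have hIoi : ∫⁻ z in Ioi (0:ℝ), ENNReal.ofReal (rexp (-(a * |z|))) = ENNReal.ofReal (1 / a) := by
    have h1 : ∀ᵐ z ∂(volume : Measure ℝ), z ∈ Ioi (0:ℝ) →
        ENNReal.ofReal (rexp (-(a * |z|))) = ENNReal.ofReal (rexp (-(a * z)))  := by
      filter_upwards with z hz
      rw [abs_of_pos hz]
    rw [setLIntegral_congr_fun_ae measurableSet_Ioi h1, ← ofReal_integral_eq_lintegral_ofReal]
    · congr 1
      have := integral_comp_mul_left_Ioi (fun x => rexp (-x)) 0 ha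
      simp only [mul_zero] at this
      have h2 : ∫ x in Ioi (0:ℝ), rexp (-(a * x)) = a⁻¹ • ∫ x in Ioi (0:ℝ), rexp (-x) := by
        simpa using this
      rw [h2, integral_exp_neg_Ioi_zero, smul_eq_mul, mul_one, one_div]
    · have := exp_neg_integrableOn_Ioi 0 ha
      simpa [neg_mul] using this.integrable
    · filter_upwards with z using (exp_pos _).le
  have hIci : ∫⁻ z in Ici (0:ℝ), ENNReal.ofReal (rexp (-(a * |z|))) = ENNReal.ofReal (1 / a) := by
    rw [← setLIntegral_congr (Ioi_ae_eq_Ici (a := (0:ℝ)))]; exact hIoi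
  have hsplit : ∫⁻ z : ℝ, ENNReal.ofReal (rexp (-(a * |z|)))
      = (∫⁻ z in Iio (0:ℝ), ENNReal.ofReal (rexp (-(a * |z|))))
        + ∫⁻ z in Ici (0:ℝ), ENNReal.ofReal (rexp (-(a * |z|))) := by
    rw [← lintegral_add_compl (μ := volume) _ (measurableSet_Iio (a := (0:ℝ)))]
    congr 1
    rw [compl_Iio]
  have hIio : ∫⁻ z in Iio (0:ℝ), ENNReal.ofReal (rexp (-(a * |z|))) = ENNReal.ofReal (1 / a) := by
    have h0 : ∫⁻ z in Iio (0:ℝ), ENNReal.ofReal (rexp (-(a * |z|)))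
        = ∫⁻ z : ℝ, (Iio (0:ℝ)).indicator (fun z => ENNReal.ofReal (rexp (-(a * |z|)))) z :=
      (lintegral_indicator measurableSet_Iio _).symm
    rw [h0, ← lint_neg_eq _ ((hmeas.indicator measurableSet_Iio))]
    have h1 : ∀ z : ℝ, (Iio (0:ℝ)).indicator (fun z => ENNReal.ofReal (rexp (-(a * |z|)))) (-z)
        = (Ioi (0:ℝ)).indicator (fun z => ENNReal.ofReal (rexp (-(a * |z|)))) z := by
      intro z
      simp only [Set.indicator_apply, mem_Iio, mem_Ioi, neg_lt_zero, abs_neg]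
    simp_rw [h1]
    rw [lintegral_indicator measurableSet_Ioi]
    exact hIoi
  rw [hsplit, hIci, hIio, ← ENNReal.ofReal_add (by positivity) (by positivity)]
  congr 1
  ring

section Young

variable {t : ℝ} (ht : 0 < t)

/-- The rescaled kernel `(1/(2t)) exp(-|z|/(2t))` as an `ℝ≥0∞`-valued function. -/
noncomputable def Ht (t z : ℝ) : ℝ≥0∞ := ENNReal.ofReal ((1/(2*t)) * rexp (-((1/(2*t)) * |z|)))

lemma Ht_meas : Measurable (Ht t) := by
  apply Measurable.ennreal_ofReal; fun_prop

lemma Ht_ne_zero (ht : 0 < t) (z : ℝ) : Ht t z ≠ 0 := by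
  simp only [Ht, ne_eq, ENNReal.ofReal_eq_zero, not_le]
  positivity

lemma Ht_ne_top (z : ℝ) : Ht t z ≠ ⊤ := ENNReal.ofReal_ne_top

lemma Ht_integral (ht : 0 < t) : ∫⁻ z, Ht t z = ENNReal.ofReal 2 := by
  have ha : 0 < 1/(2*t) := by positivity
  simp only [Ht]
  simp_rw [ENNReal.ofReal_mul ha.le]
  rw [lintegral_const_mul' _ _ ENNReal.ofReal_ne_top, lint_exp_abs ha,
    ← ENNReal.ofReal_mul ha.le]
  congr 1
  field_simp

lemma Ht_rpow_integral (ht : 0 < t) {r : ℝ} (hr : 0 < r) :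
    ∫⁻ z, Ht t z ^ r = ENNReal.ofReal ((1/(2*t)) ^ r * (2 / ((1/(2*t)) * r))) := by
  have ha : 0 < 1/(2*t) := by positivity
  have h1 : ∀ z : ℝ, Ht t z ^ r
      = ENNReal.ofReal ((1/(2*t)) ^ r) * ENNReal.ofReal (rexp (-(((1/(2*t)) * r) * |z|))) := by
    intro z
    rw [Ht, ENNReal.ofReal_rpow_of_nonneg (by positivity) hr.le,
      Real.mul_rpow ha.le (exp_pos _).le, ← Real.exp_mul, ENNReal.ofReal_mul (by positivity)]
    ring_nf
  simp_rw [h1]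
  rw [lintegral_const_mul' _ _ ENNReal.ofReal_ne_top, lint_exp_abs (by positivity),
    ← ENNReal.ofReal_mul (by positivity)]

end Young


lemma real_kernel_norm_bound (ht : 0 < t) {p' r : ℝ} (hp1 : 1 < p') (hr : r = p'.conjExponent) :
    ((1/(2*t)) ^ r * (2 / ((1/(2*t)) * r))) ^ (1/r) ≤ 2 * t ^ (-(1/p')) := by
  have hc : p'.HolderConjugate r := hr ▸ Real.HolderConjugate.conjExponent hp1
  have hr1 : 1 < r := hc.symm.lt
  have hr0 : 0 < r := by linarith
  have hinv : 1/p' + 1/r = 1 := by simpa [one_div] using hc.inv_add_inv_eq_one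
  have ha : 0 < 1/(2*t) := by positivity
  have key : (1/(2*t)) ^ r * (2 / ((1/(2*t)) * r)) = (1/(2*t)) ^ (r-1) * (2/r) := by
    rw [show r = (r-1) + 1 by ring, Real.rpow_add ha, Real.rpow_one,
      show (r-1)+1 = r by ring]
    field_simp
  rw [key, Real.mul_rpow (by positivity) (by positivity)]
  have e1 : ((1/(2*t)) ^ (r-1)) ^ (1/r) = (1/(2*t)) ^ (1/p') := by
    rw [← Real.rpow_mul ha.le]
    congr 1
    have h2 : (r - 1) * (1/r) = 1 - 1/r := by field_simp
    rw [h2]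
    linarith
  rw [e1]
  have e2 : (1/(2*t)) ^ (1/p') ≤ t ^ (-(1/p')) := by
    rw [Real.rpow_neg ht.le, ← Real.inv_rpow ht.le]
    apply Real.rpow_le_rpow ha.le _ (by positivity)
    rw [one_div]
    apply inv_anti₀ ht
    linarith
  have e3 : (2/r) ^ (1/r) ≤ 2 := by
    rcases le_or_gt (2/r) 1 with h | h
    · exact le_trans (Real.rpow_le_one (by positivity) h (by positivity)) one_le_two
    · calc (2/r) ^ (1/r) ≤ (2/r) ^ (1:ℝ) :=
            Real.rpow_le_rpow_of_exponent_le h.le (by rw [div_le_one hr0]; linarith)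
        _ = 2/r := Real.rpow_one _
        _ ≤ 2 := by rw [div_le_iff₀ hr0]; nlinarith
  calc (1/(2*t)) ^ (1/p') * (2/r) ^ (1/r) ≤ t ^ (-(1/p')) * 2 :=
        mul_le_mul e2 e3 (by positivity) (by positivity)
    _ = 2 * t ^ (-(1/p')) := mul_comm _ _

lemma young_sup_bound (ht : 0 < t) {p' : ℝ} (hp1 : 1 ≤ p') (G : ℝ → ℝ≥0∞) (hG : Measurable G)
    (x : ℝ) :
    ∫⁻ y, Ht t (x - y) * G y
      ≤ ENNReal.ofReal (2 * t ^ (-(1/p'))) * (∫⁻ y, G y ^ p') ^ (1/p') := by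
  rcases eq_or_lt_of_le hp1 with h1 | h1
  · -- p' = 1
    subst h1
    simp only [Real.rpow_one, one_div, inv_one, ENNReal.rpow_one]
    calc ∫⁻ y, Ht t (x - y) * G y ≤ ∫⁻ y, ENNReal.ofReal (2 * t ^ (-(1:ℝ))) * G y := by
          apply lintegral_mono
          intro y
          apply mul_le_mul' _ le_rfl
          apply ENNReal.ofReal_le_ofReal
          calc (1/(2*t)) * rexp (-((1/(2*t)) * |x - y|))
              ≤ (1/(2*t)) * 1 := by
                apply mul_le_mul_of_nonneg_left _ (by positivity)
                exact Real.exp_le_one_iff.mpr (neg_nonpos.mpr (by positivity))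
            _ ≤ 2 * t ^ (-(1:ℝ)) := by
                rw [Real.rpow_neg_one, mul_one, show (2:ℝ) * t⁻¹ = 2/t by ring,
                  div_le_div_iff₀ (by positivity) ht]
                nlinarith
      _ = ENNReal.ofReal (2 * t ^ (-(1:ℝ))) * ∫⁻ y, G y :=
          lintegral_const_mul' _ _ ENNReal.ofReal_ne_top
  · -- 1 < p'
    set r := Real.conjExponent p' with hr
    have hc : p'.HolderConjugate r := Real.HolderConjugate.conjExponent h1
    have hr0 : 0 < r := by linarith [hc.symm.lt]
    have holder := ENNReal.lintegral_mul_le_Lp_mul_Lq volume hc.symm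
      (f := fun y => Ht t (x - y)) (g := G)
      ((Ht_meas.comp (measurable_const.sub measurable_id)).aemeasurable) hG.aemeasurable
    simp only [Pi.mul_apply] at holder
    refine holder.trans (mul_le_mul' ?_ le_rfl)
    have e1 : ∫⁻ y, Ht t (x - y) ^ r = ∫⁻ z, Ht t z ^ r :=
      lint_sub_left_eq (fun z => Ht t z ^ r) (Ht_meas.pow_const r) x
    rw [e1, Ht_rpow_integral ht hr0,
      ENNReal.ofReal_rpow_of_nonneg (by positivity) (by positivity)]
    exact ENNReal.ofReal_le_ofReal (real_kernel_norm_bound ht h1 hr)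

lemma young_swap_key (ht : 0 < t) (W : ℝ → ℝ≥0∞) (hW : Measurable W) :
    ∫⁻ x : ℝ, (∫⁻ y, Ht t (x - y) * W y) = ENNReal.ofReal 2 * ∫⁻ y, W y := by
  rw [lintegral_lintegral_swap]
  · have e1 : ∀ y : ℝ, ∫⁻ x, Ht t (x - y) * W y = ENNReal.ofReal 2 * W y := by
      intro y
      calc ∫⁻ x, Ht t (x - y) * W y = ∫⁻ x, W y * Ht t (x - y) := by simp_rw [mul_comm]
        _ = W y * ∫⁻ x, Ht t (x - y) :=
            lintegral_const_mul _ (Ht_meas.comp (measurable_id.sub measurable_const))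
        _ = ENNReal.ofReal 2 * W y := by
            rw [lintegral_sub_right_eq_self (Ht t) y, Ht_integral ht, mul_comm]
    simp_rw [e1]
    rw [lintegral_const_mul' _ _ ENNReal.ofReal_ne_top]
  · apply Measurable.aemeasurable
    exact (Ht_meas.comp (measurable_fst.sub measurable_snd)).mul (hW.comp measurable_snd)

lemma ofReal_two_rpow_split {p' : ℝ} (hp1 : 1 ≤ p') :
    (ENNReal.ofReal 2) ^ p' = (ENNReal.ofReal 2) ^ (p' - 1) * (ENNReal.ofReal 2) ^ (1:ℝ) := by
  rw [← ENNReal.rpow_add_of_nonneg _ _ (by linarith) zero_le_one]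
  congr 1
  ring

lemma young_Lp_bound (ht : 0 < t) {p' : ℝ} (hp1 : 1 ≤ p') (G : ℝ → ℝ≥0∞) (hG : Measurable G) :
    ∫⁻ x : ℝ, (∫⁻ y, Ht t (x - y) * G y) ^ p'
      ≤ (ENNReal.ofReal 2) ^ p' * ∫⁻ y, G y ^ p' := by
  rcases eq_or_lt_of_le hp1 with h1 | h1
  · subst h1
    simp only [ENNReal.rpow_one]
    rw [young_swap_key ht G hG]
  · set r := Real.conjExponent p' with hr
    have hc : p'.HolderConjugate r := Real.HolderConjugate.conjExponent h1
    have hr1 : 1 < r := hc.symm.lt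
    have hr0 : 0 < r := by linarith
    have hp0 : 0 < p' := by linarith
    have hinv : 1/r + 1/p' = 1 := by simpa [one_div] using hc.symm.inv_add_inv_eq_one
    have hpt : ∀ x : ℝ, (∫⁻ y, Ht t (x - y) * G y) ^ p'
        ≤ (ENNReal.ofReal 2) ^ (p' - 1) * ∫⁻ y, Ht t (x - y) * G y ^ p' := by
      intro x
      have hsplit : ∀ y : ℝ, Ht t (x - y) * G y
          = (Ht t (x - y) ^ (1/r)) * ((Ht t (x - y) ^ (1/p')) * G y) := by
        intro y
        rw [← mul_assoc, ← ENNReal.rpow_add _ _ (Ht_ne_zero ht _) (Ht_ne_top _), hinv,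
          ENNReal.rpow_one]
      have hmeas1 : Measurable fun y : ℝ => Ht t (x - y) ^ (1/r) :=
        (Ht_meas.comp (measurable_const.sub measurable_id)).pow_const _
      have hmeas2 : Measurable fun y : ℝ => (Ht t (x - y) ^ (1/p')) * G y :=
        ((Ht_meas.comp (measurable_const.sub measurable_id)).pow_const _).mul hG
      have holder := ENNReal.lintegral_mul_le_Lp_mul_Lq volume hc.symm
        (f := fun y => Ht t (x - y) ^ (1/r)) (g := fun y => (Ht t (x - y) ^ (1/p')) * G y)
        hmeas1.aemeasurable hmeas2.aemeasurable
      simp only [Pi.mul_apply] at holder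
      have e1 : ∀ y : ℝ, (Ht t (x - y) ^ (1/r)) ^ r = Ht t (x - y) := by
        intro y
        rw [← ENNReal.rpow_mul, one_div, inv_mul_cancel₀ hr0.ne', ENNReal.rpow_one]
      have e2 : ∀ y : ℝ, ((Ht t (x - y) ^ (1/p')) * G y) ^ p' = Ht t (x - y) * G y ^ p' := by
        intro y
        rw [ENNReal.mul_rpow_of_nonneg _ _ hp0.le, ← ENNReal.rpow_mul, one_div,
          inv_mul_cancel₀ hp0.ne', ENNReal.rpow_one]
      simp_rw [e1, e2] at holder
      have e3 : ∫⁻ y, Ht t (x - y) = ENNReal.ofReal 2 := by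
        rw [lint_sub_left_eq (Ht t) Ht_meas x, Ht_integral ht]
      rw [e3] at holder
      calc (∫⁻ y, Ht t (x - y) * G y) ^ p'
          = (∫⁻ y, (Ht t (x - y) ^ (1/r)) * ((Ht t (x - y) ^ (1/p')) * G y)) ^ p' := by
            simp_rw [hsplit]
        _ ≤ ((ENNReal.ofReal 2) ^ (1/r) * (∫⁻ y, Ht t (x - y) * G y ^ p') ^ (1/p')) ^ p' :=
            ENNReal.rpow_le_rpow holder hp0.le
        _ = (ENNReal.ofReal 2) ^ (p' - 1) * ∫⁻ y, Ht t (x - y) * G y ^ p' := by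
            rw [ENNReal.mul_rpow_of_nonneg _ _ hp0.le, ← ENNReal.rpow_mul,
              ← ENNReal.rpow_mul]
            congr 1
            · congr 1
              have : (1/r) * p' = p' - 1 := by
                have h2 : 1/r = 1 - 1/p' := by linarith
                rw [h2]
                field_simp
              exact this
            · rw [one_div, inv_mul_cancel₀ hp0.ne', ENNReal.rpow_one]
    calc ∫⁻ x : ℝ, (∫⁻ y, Ht t (x - y) * G y) ^ p'
        ≤ ∫⁻ x : ℝ, (ENNReal.ofReal 2) ^ (p' - 1) * ∫⁻ y, Ht t (x - y) * G y ^ p' :=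
          lintegral_mono hpt
      _ = (ENNReal.ofReal 2) ^ (p' - 1) * ∫⁻ x : ℝ, ∫⁻ y, Ht t (x - y) * G y ^ p' :=
          lintegral_const_mul' _ _ (ENNReal.rpow_ne_top_of_nonneg (by linarith)
            ENNReal.ofReal_ne_top)
      _ = (ENNReal.ofReal 2) ^ (p' - 1) * (ENNReal.ofReal 2 * ∫⁻ y, G y ^ p') := by
          rw [young_swap_key ht _ (hG.pow_const p')]
      _ = (ENNReal.ofReal 2) ^ p' * ∫⁻ y, G y ^ p' := by
          rw [ofReal_two_rpow_split hp1, ENNReal.rpow_one, mul_assoc]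

lemma young_real_const {p' q' : ℝ} (ht : 0 < t) (hp0 : 0 < p') (hq0 : 0 < q') (hpq : p' ≤ q') :
    (2 * t ^ (-(1/p'))) ^ ((q' - p')/q') * (2:ℝ) ^ (p'/q') = 2 * t ^ (1/q' - 1/p') := by
  rw [Real.mul_rpow (by norm_num) (Real.rpow_nonneg ht.le _), ← Real.rpow_mul ht.le,
    mul_assoc, mul_comm (t ^ (-(1/p') * ((q' - p')/q'))) (2 ^ (p'/q')), ← mul_assoc,
    ← Real.rpow_add (by norm_num : (0:ℝ) < 2)]
  have e1 : (q' - p')/q' + p'/q' = 1 := by field_simp; ring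
  have e2 : -(1/p') * ((q' - p')/q') = 1/q' - 1/p' := by
    rw [div_sub_div _ _ hq0.ne' hp0.ne', neg_mul, div_mul_div_comm, ← neg_div,
      div_eq_div_iff (by positivity) (by positivity)]
    ring
  rw [e1, e2, Real.rpow_one]

lemma young_alg (c1 c2 N : ℝ≥0∞) {p' q' : ℝ} (hp0 : 0 < p') (hq0 : 0 < q') (hpq : p' ≤ q') :
    ((c1 * N) ^ (q' - p') * (c2 ^ p' * N ^ p')) ^ (1/q')
      = c1 ^ ((q' - p') * (1/q')) * c2 ^ (p' * (1/q')) * N := by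
  have ha : (0:ℝ) ≤ q' - p' := by linarith
  rw [ENNReal.mul_rpow_of_nonneg c1 N ha]
  have e0 : c1 ^ (q' - p') * N ^ (q' - p') * (c2 ^ p' * N ^ p')
      = (c1 ^ (q' - p') * c2 ^ p') * (N ^ (q' - p') * N ^ p') := by ring
  rw [e0, ← ENNReal.rpow_add_of_nonneg _ _ ha hp0.le]
  have e1 : q' - p' + p' = q' := by ring
  rw [e1, ENNReal.mul_rpow_of_nonneg _ _ (by positivity : (0:ℝ) ≤ 1/q'),
    ENNReal.mul_rpow_of_nonneg _ _ (by positivity : (0:ℝ) ≤ 1/q'),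
    ← ENNReal.rpow_mul, ← ENNReal.rpow_mul, ← ENNReal.rpow_mul,
    mul_one_div q' q', div_self hq0.ne', ENNReal.rpow_one]

lemma young (ht : 0 < t) {p' q' : ℝ} (hp1 : 1 ≤ p') (hpq : p' ≤ q')
    (G : ℝ → ℝ≥0∞) (hG : Measurable G) :
    (∫⁻ x : ℝ, (∫⁻ y, Ht t (x - y) * G y) ^ q') ^ (1/q')
      ≤ ENNReal.ofReal (2 * t ^ (1/q' - 1/p')) * (∫⁻ y, G y ^ p') ^ (1/p') := by
  have hp0 : 0 < p' := by linarith
  have hq0 : 0 < q' := by linarith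
  by_cases hXtop : (∫⁻ y, G y ^ p') = ⊤
  · rw [hXtop, ENNReal.top_rpow_of_pos (by positivity), ENNReal.mul_top]
    · exact le_top
    · simp only [ne_eq, ENNReal.ofReal_eq_zero, not_le]
      positivity
  have hNpp : ((∫⁻ y, G y ^ p') ^ (1/p')) ^ p' = ∫⁻ y, G y ^ p' := by
    rw [← ENNReal.rpow_mul, one_div, inv_mul_cancel₀ hp0.ne', ENNReal.rpow_one]
  set c1 := ENNReal.ofReal (2 * t ^ (-(1/p'))) with hc1
  set Np := (∫⁻ y, G y ^ p') ^ (1/p') with hNp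
  have step1 : ∀ x : ℝ, (∫⁻ y, Ht t (x - y) * G y) ^ q'
      ≤ (c1 * Np) ^ (q' - p') * (∫⁻ y, Ht t (x - y) * G y) ^ p' := by
    intro x
    have hsp : (∫⁻ y, Ht t (x - y) * G y) ^ q'
        = (∫⁻ y, Ht t (x - y) * G y) ^ (q' - p') * (∫⁻ y, Ht t (x - y) * G y) ^ p' := by
      rw [← ENNReal.rpow_add_of_nonneg _ _ (by linarith) hp0.le]
      congr 1
      ring
    rw [hsp]
    exact mul_le_mul' (ENNReal.rpow_le_rpow (young_sup_bound ht hp1 G hG x) (by linarith)) le_rfl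
  have hfinc : (c1 * Np) ^ (q' - p') ≠ ⊤ :=
    ENNReal.rpow_ne_top_of_nonneg (by linarith)
      (ENNReal.mul_ne_top ENNReal.ofReal_ne_top
        (ENNReal.rpow_ne_top_of_nonneg (by positivity) hXtop))
  have step2 : ∫⁻ x : ℝ, (∫⁻ y, Ht t (x - y) * G y) ^ q'
      ≤ (c1 * Np) ^ (q' - p') * ((ENNReal.ofReal 2) ^ p' * Np ^ p') := by
    calc ∫⁻ x : ℝ, (∫⁻ y, Ht t (x - y) * G y) ^ q'
        ≤ ∫⁻ x : ℝ, (c1 * Np) ^ (q' - p') * (∫⁻ y, Ht t (x - y) * G y) ^ p' :=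
          lintegral_mono step1
      _ = (c1 * Np) ^ (q' - p') * ∫⁻ x : ℝ, (∫⁻ y, Ht t (x - y) * G y) ^ p' :=
          lintegral_const_mul' _ _ hfinc
      _ ≤ (c1 * Np) ^ (q' - p') * ((ENNReal.ofReal 2) ^ p' * Np ^ p') := by
          rw [hNp, hNpp]
          exact mul_le_mul' le_rfl (young_Lp_bound ht hp1 G hG)
  have hfin : (∫⁻ x : ℝ, (∫⁻ y, Ht t (x - y) * G y) ^ q') ^ (1/q')
      ≤ ((c1 * Np) ^ (q' - p') * ((ENNReal.ofReal 2) ^ p' * Np ^ p')) ^ (1/q') :=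
    ENNReal.rpow_le_rpow step2 (by positivity)
  refine hfin.trans (le_of_eq ?_)
  rw [young_alg c1 (ENNReal.ofReal 2) Np hp0 hq0 hpq]
  congr 1
  rw [hc1, ENNReal.ofReal_rpow_of_nonneg
      (mul_nonneg (by norm_num) (Real.rpow_nonneg ht.le _))
      (mul_nonneg (by linarith) (by positivity)),
    ENNReal.ofReal_rpow_of_nonneg (by norm_num) (by positivity),
    ← ENNReal.ofReal_mul (by positivity)]
  congr 1
  have := young_real_const (t := t) ht hp0 hq0 hpq
  rw [← this]
  congr 2 <;> field_simp

lemma exp_decay_bound {K s : ℝ} (hK : 0 ≤ K) (hs : 0 ≤ s) :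
    rexp (-(s/2)) ≤ (1 + 2*K) ^ K * (1 + s) ^ (-K) := by
  rcases eq_or_lt_of_le hK with h0 | h0
  · rw [← h0]
    simp only [neg_zero, Real.rpow_zero, one_mul, mul_zero, add_zero]
    calc rexp (-(s/2)) ≤ rexp 0 := Real.exp_le_exp.mpr (by linarith)
      _ = 1 := Real.exp_zero
  · have h1s : (0:ℝ) < 1 + s := by linarith
    have h12K : (0:ℝ) < 1 + 2*K := by linarith
    have key : (1 + s) ^ K ≤ (1 + 2*K) ^ K * rexp (s/2) := by
      have h1 : 1 + s ≤ (1 + 2*K) * rexp (s/(2*K)) := by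
        have h2 : s/(2*K) + 1 ≤ rexp (s/(2*K)) := Real.add_one_le_exp _
        have h3 : (1 + 2*K) * (s/(2*K) + 1) ≤ (1 + 2*K) * rexp (s/(2*K)) :=
          mul_le_mul_of_nonneg_left h2 h12K.le
        refine le_trans ?_ h3
        have h4 : (1 + 2*K) * (s/(2*K) + 1) = s/(2*K) + s + 1 + 2*K := by
          field_simp
          ring
        rw [h4]
        have : 0 ≤ s/(2*K) := by positivity
        linarith
      calc (1 + s) ^ K ≤ ((1 + 2*K) * rexp (s/(2*K))) ^ K :=
            Real.rpow_le_rpow h1s.le h1 hK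
        _ = (1 + 2*K) ^ K * rexp (s/2) := by
            rw [Real.mul_rpow h12K.le (Real.exp_pos _).le, ← Real.exp_mul]
            congr 2
            field_simp
    rw [Real.rpow_neg h1s.le, mul_comm ((1+2*K)^K) ((1+s)^K)⁻¹, ← div_eq_inv_mul,
      le_div_iff₀ (by positivity)]
    calc rexp (-(s/2)) * (1 + s) ^ K ≤ rexp (-(s/2)) * ((1 + 2*K) ^ K * rexp (s/2)) :=
          mul_le_mul_of_nonneg_left key (Real.exp_pos _).le
      _ = (1 + 2*K) ^ K := by
          rw [mul_comm ((1+2*K)^K) (rexp (s/2)), ← mul_assoc, ← Real.exp_add]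
          norm_num

lemma kernel_decay {t d z : ℝ} (ht : 0 < t) (hd : d ≤ |z|) :
    (1/(2*t)) * rexp (-|z|/t) ≤ rexp (-(d/(2*t))) * ((1/(2*t)) * rexp (-((1/(2*t)) * |z|))) := by
  rw [← mul_assoc, mul_comm (rexp (-(d/(2*t)))) (1/(2*t)), mul_assoc, ← Real.exp_add]
  apply mul_le_mul_of_nonneg_left _ (by positivity)
  apply Real.exp_le_exp.mpr
  have e1 : -(d/(2*t)) + -((1/(2*t)) * |z|) = -((d + |z|)/(2*t)) := by
    field_simp
    ring
  rw [e1, neg_div, neg_le_neg_iff, div_le_div_iff₀ (by positivity) ht]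
  nlinarith [abs_nonneg z]


/-- For `1 ≤ p ≤ q < ∞` and `K ∈ [0,∞)` there is `C > 0` such that for all
`t > 0`, all Borel sets `E, F ⊆ ℝ` and all `f ∈ L^p(ℝ,ℂ)`:
`‖χ_F ⬝ (k_t * (χ_E f))‖_{L^q} ≤ C t^{1/q-1/p} (1 + d(E,F)/t)^{-K} ‖χ_E f‖_{L^p}`. -/
theorem stmt1 (p q : ℝ≥0∞) (hp : 1 ≤ p) (hpq : p ≤ q) (hq : q ≠ ⊤) (K : ℝ) (hK : 0 ≤ K) :
    ∃ C : ℝ, 0 < C ∧ ∀ t : ℝ, 0 < t → ∀ E F : Set ℝ, MeasurableSet E → MeasurableSet F →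
      ∀ f : ℝ → ℂ, MemLp f p (volume : Measure ℝ) →
      eLpNorm (F.indicator fun x => ∫ y, (resKernel t (x - y) : ℂ) * E.indicator f y) q volume ≤
        ENNReal.ofReal
            (C * t ^ ((1 / q).toReal - (1 / p).toReal) * (1 + setDist E F / t) ^ (-K)) *
          eLpNorm (E.indicator f) p volume := by
  refine ⟨2 * (1 + 2*K) ^ K, by positivity, ?_⟩
  intro t ht E F hE hF f hf
  -- real exponents
  have hp0 : p ≠ 0 := by intro h; rw [h] at hp; exact absurd hp (by simp)
  have hpt : p ≠ ⊤ := fun h => hq (top_le_iff.mp (h ▸ hpq))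
  have hq0 : q ≠ 0 := fun h => hp0 (le_antisymm (h ▸ hpq) zero_le)
  set p' := p.toReal with hp'
  set q' := q.toReal with hq'
  have hp'1 : 1 ≤ p' := by
    have := ENNReal.toReal_mono hpt hp
    simpa using this
  have hpq' : p' ≤ q' := ENNReal.toReal_mono hq hpq
  have hq'0 : 0 < q' := by linarith
  have hp'0 : 0 < p' := by linarith
  -- measurable representative
  set f' := hf.aestronglyMeasurable.mk f with hf'def
  have hf'sm : StronglyMeasurable f' := hf.aestronglyMeasurable.stronglyMeasurable_mk
  have hff' : f =ᵐ[volume] f' := hf.aestronglyMeasurable.ae_eq_mk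
  set g' := E.indicator f' with hg'def
  have hg'sm : StronglyMeasurable g' := hf'sm.indicator hE
  have hgg' : E.indicator f =ᵐ[volume] g' := by
    filter_upwards [hff'] with y hy
    simp only [hg'def, Set.indicator]
    rw [hy]
  set G : ℝ → ℝ≥0∞ := fun y => (‖g' y‖₊ : ℝ≥0∞) with hGdef
  have hG : Measurable G := hg'sm.measurable.enorm
  set d := setDist E F with hd
  have hd0 : 0 ≤ d := by
    apply Real.sInf_nonneg
    rintro x ⟨a, ha, b, hb, rfl⟩
    exact dist_nonneg
  set ε := ENNReal.ofReal (rexp (-(d/(2*t)))) with hε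
  -- replace f by its measurable representative inside the integral
  have hueq : (F.indicator fun x => ∫ y, (resKernel t (x - y) : ℂ) * E.indicator f y)
      = (F.indicator fun x => ∫ y, (resKernel t (x - y) : ℂ) * g' y) := by
    have hfeq : (fun x => ∫ y, (resKernel t (x - y) : ℂ) * E.indicator f y)
        = fun x => ∫ y, (resKernel t (x - y) : ℂ) * g' y := by
      funext x
      apply integral_congr_ae
      filter_upwards [hgg'] with y hy
      rw [hy]
    rw [hfeq]
  rw [hueq]
  -- pointwise bound
  have hres_nonneg : ∀ z : ℝ, 0 ≤ resKernel t z := by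
    intro z
    unfold resKernel
    positivity
  have hpt_bound : ∀ x : ℝ,
      (‖(F.indicator fun x => ∫ y, (resKernel t (x - y) : ℂ) * g' y) x‖₊ : ℝ≥0∞)
        ≤ ε * ∫⁻ y, Ht t (x - y) * G y := by
    intro x
    by_cases hxF : x ∈ F
    · rw [Set.indicator_of_mem hxF]
      calc (‖∫ y, (resKernel t (x - y) : ℂ) * g' y‖₊ : ℝ≥0∞)
          ≤ ∫⁻ y, ‖(resKernel t (x - y) : ℂ) * g' y‖₊ :=
            enorm_integral_le_lintegral_enorm _
        _ ≤ ∫⁻ y, ε * (Ht t (x - y) * G y) := by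
            apply lintegral_mono
            intro y
            show (‖(resKernel t (x - y) : ℂ) * g' y‖₊ : ℝ≥0∞) ≤ ε * (Ht t (x - y) * G y)
            have e1 : (‖(resKernel t (x - y) : ℂ) * g' y‖₊ : ℝ≥0∞)
                = ENNReal.ofReal (resKernel t (x - y)) * G y := by
              rw [nnnorm_mul, ENNReal.coe_mul]
              congr 1
              rw [Complex.nnnorm_real]
              exact Real.enorm_eq_ofReal (hres_nonneg _)
            rw [e1]
            by_cases hyE : y ∈ E
            · have hdist : d ≤ |x - y| := by
                have h1 : dist y x ∈ Set.image2 dist E F := Set.mem_image2_of_mem hyE hxF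
                have h2 : d ≤ dist y x := csInf_le ⟨0, by
                  rintro z ⟨a, _, b, _, rfl⟩; exact dist_nonneg⟩ h1
                rwa [Real.dist_eq, abs_sub_comm] at h2
              have hker : ENNReal.ofReal (resKernel t (x - y)) ≤ ε * Ht t (x - y) := by
                rw [hε, Ht, ← ENNReal.ofReal_mul (Real.exp_pos _).le]
                apply ENNReal.ofReal_le_ofReal
                exact kernel_decay ht hdist
              calc ENNReal.ofReal (resKernel t (x - y)) * G y
                  ≤ (ε * Ht t (x - y)) * G y := mul_le_mul' hker le_rfl
                _ = ε * (Ht t (x - y) * G y) := mul_assoc _ _ _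
            · have : G y = 0 := by
                simp [hGdef, hg'def, Set.indicator_of_notMem hyE]
              rw [this, mul_zero]
              exact zero_le
        _ = ε * ∫⁻ y, Ht t (x - y) * G y :=
            lintegral_const_mul' _ _ ENNReal.ofReal_ne_top
    · rw [Set.indicator_of_notMem hxF]
      simp only [nnnorm_zero, ENNReal.coe_zero]
      exact zero_le
  -- main estimate
  rw [eLpNorm_eq_lintegral_rpow_enorm_toReal hq0 hq, eLpNorm_eq_lintegral_rpow_enorm_toReal hp0 hpt]
  have hGnorm : (∫⁻ y, ‖E.indicator f y‖ₑ ^ p.toReal) ^ (1 / p.toReal)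
      = (∫⁻ y, G y ^ p') ^ (1/p') := by
    congr 1
    apply lintegral_congr_ae
    filter_upwards [hgg'] with y hy
    rw [hy]
    rfl
  rw [hGnorm]
  calc (∫⁻ x, (‖(F.indicator fun x => ∫ y, (resKernel t (x - y) : ℂ) * g' y) x‖₊ : ℝ≥0∞)
          ^ q.toReal) ^ (1 / q.toReal)
      ≤ (∫⁻ x, (ε * ∫⁻ y, Ht t (x - y) * G y) ^ q') ^ (1/q') :=
        ENNReal.rpow_le_rpow (lintegral_mono fun x =>
          ENNReal.rpow_le_rpow (hpt_bound x) (by positivity)) (by positivity)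
    _ = ε * (∫⁻ x, (∫⁻ y, Ht t (x - y) * G y) ^ q') ^ (1/q') := by
        simp_rw [ENNReal.mul_rpow_of_nonneg _ _ hq'0.le]
        rw [lintegral_const_mul' _ _ (ENNReal.rpow_ne_top_of_nonneg hq'0.le
            ENNReal.ofReal_ne_top),
          ENNReal.mul_rpow_of_nonneg _ _ (by positivity : (0:ℝ) ≤ 1/q'),
          ← ENNReal.rpow_mul, mul_one_div, div_self hq'0.ne', ENNReal.rpow_one]
    _ ≤ ε * (ENNReal.ofReal (2 * t ^ (1/q' - 1/p')) * (∫⁻ y, G y ^ p') ^ (1/p')) :=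
        mul_le_mul' le_rfl (young ht hp'1 hpq' G hG)
    _ ≤ ENNReal.ofReal ((2 * (1 + 2*K) ^ K) * t ^ ((1/q).toReal - (1/p).toReal)
          * (1 + d / t) ^ (-K)) * (∫⁻ y, G y ^ p') ^ (1/p') := by
        rw [← mul_assoc]
        apply mul_le_mul' _ le_rfl
        have hεb : ε ≤ ENNReal.ofReal ((1 + 2*K) ^ K * (1 + d/t) ^ (-K)) := by
          apply ENNReal.ofReal_le_ofReal
          have : d/(2*t) = (d/t)/2 := by ring
          rw [this]
          exact exp_decay_bound hK (by positivity)
        calc ε * ENNReal.ofReal (2 * t ^ (1/q' - 1/p'))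
            ≤ ENNReal.ofReal ((1 + 2*K) ^ K * (1 + d/t) ^ (-K))
              * ENNReal.ofReal (2 * t ^ (1/q' - 1/p')) := mul_le_mul' hεb le_rfl
          _ = ENNReal.ofReal ((2 * (1 + 2*K) ^ K) * t ^ ((1/q).toReal - (1/p).toReal)
                * (1 + d / t) ^ (-K)) := by
              rw [← ENNReal.ofReal_mul (by positivity)]
              congr 1
              have he : (1/q).toReal - (1/p).toReal = 1/q' - 1/p' := by
                simp [one_div, ENNReal.toReal_inv, hp', hq']
              rw [he]
              ring
end

section
/- Let $K \in [0,1]$. There exists a constant $C > 0$ such that for all $t > 0$, all Borel sets $E, F \subseteq \mathbb{R}$ and all $f \in L^2(\mathbb{R},\mathbb{C})$: $\|\chi_F \cdot (p_t * (\chi_E f))\|_{L^2} \le C \left(1 + \frac{d(E,F)}{t}\right)^{-K} \|\chi_E f\|_{L^2}$. -/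
open MeasureTheory ENNReal

/-- The Poisson kernel `p_t(x) = (1/π) t/(x² + t²)` on `ℝ`. -/
noncomputable def poissonKernelR (t x : ℝ) : ℝ := (1 / Real.pi) * (t / (x ^ 2 + t ^ 2))

open Set

lemma poissonKernel_nonneg {t : ℝ} (ht : 0 < t) (x : ℝ) : 0 ≤ poissonKernelR t x := by
  unfold poissonKernelR; positivity

lemma poissonKernel_neg (t x : ℝ) : poissonKernelR t (-x) = poissonKernelR t x := by
  simp [poissonKernelR]

lemma measurable_poissonKernel (t : ℝ) : Measurable (poissonKernelR t) := by
  unfold poissonKernelR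
  exact (measurable_const.div ((measurable_id.pow_const 2).add_const _)).const_mul _

lemma poissonKernel_eq (t x : ℝ) (ht : 0 < t) :
    poissonKernelR t x = (Real.pi * t)⁻¹ * (1 + (x / t) ^ 2)⁻¹ := by
  have h1 : (1 + (x / t) ^ 2) = (x ^ 2 + t ^ 2) / t ^ 2 := by
    field_simp; ring
  rw [h1, poissonKernelR]
  have h2 : (0:ℝ) < x ^ 2 + t ^ 2 := by positivity
  rw [inv_div]
  field_simp

lemma integrable_poissonKernel {t : ℝ} (ht : 0 < t) : Integrable (poissonKernelR t) := by
  have : Integrable (fun x : ℝ => (Real.pi * t)⁻¹ * (1 + (x / t) ^ 2)⁻¹) := by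
    exact (((integrable_comp_div_iff (fun u : ℝ => (1 + u ^ 2)⁻¹) ht.ne').2
      integrable_inv_one_add_sq)).const_mul _
  exact this.congr (Filter.Eventually.of_forall fun x => (poissonKernel_eq t x ht).symm)

lemma integral_poissonKernel {t : ℝ} (ht : 0 < t) : ∫ x, poissonKernelR t x = 1 := by
  have h : ∀ x : ℝ, poissonKernelR t x = (Real.pi * t)⁻¹ * (1 + (x / t) ^ 2)⁻¹ :=
    fun x => poissonKernel_eq t x ht
  rw [MeasureTheory.integral_congr_ae (Filter.Eventually.of_forall h)]
  rw [MeasureTheory.integral_const_mul]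
  rw [Measure.integral_comp_div (fun u : ℝ => (1 + u ^ 2)⁻¹) t]
  rw [integral_univ_inv_one_add_sq]
  rw [abs_of_pos ht, smul_eq_mul]
  field_simp

lemma lintegral_poissonKernel {t : ℝ} (ht : 0 < t) :
    ∫⁻ x, ENNReal.ofReal (poissonKernelR t x) = 1 := by
  rw [← ofReal_integral_eq_lintegral_ofReal (integrable_poissonKernel ht)
    (Filter.Eventually.of_forall (poissonKernel_nonneg ht))]
  rw [integral_poissonKernel ht]
  simp

/-- One-sided tail estimate. -/
lemma lintegral_Ioi_poissonKernel {t d : ℝ} (ht : 0 < t) (hd : 0 < d) :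
    ∫⁻ z in Ioi d, ENNReal.ofReal (poissonKernelR t z) ≤ ENNReal.ofReal (t / Real.pi / d) := by
  have hb : ∀ z ∈ Ioi d, poissonKernelR t z ≤ (t / Real.pi) * z ^ (-2 : ℝ) := by
    intro z hz
    have hz0 : 0 < z := hd.trans hz
    rw [Real.rpow_neg hz0.le, show (2:ℝ) = ((2:ℕ):ℝ) by norm_num, Real.rpow_natCast]
    rw [poissonKernelR]
    rw [show (1 / Real.pi) * (t / (z ^ 2 + t ^ 2)) = t / Real.pi / (z ^ 2 + t ^ 2) by ring,
      show t / Real.pi * (z ^ 2)⁻¹ = t / Real.pi / z ^ 2 by ring]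
    gcongr <;> nlinarith [sq_nonneg t, hz0]
  have hint : IntegrableOn (fun z : ℝ => (t / Real.pi) * z ^ (-2 : ℝ)) (Ioi d) :=
    (integrableOn_Ioi_rpow_of_lt (by norm_num) hd).const_mul _
  calc ∫⁻ z in Ioi d, ENNReal.ofReal (poissonKernelR t z)
      ≤ ∫⁻ z in Ioi d, ENNReal.ofReal ((t / Real.pi) * z ^ (-2 : ℝ)) := by
        refine setLIntegral_mono' measurableSet_Ioi fun z hz => ?_
        exact ENNReal.ofReal_le_ofReal (hb z hz)
    _ = ENNReal.ofReal (∫ z in Ioi d, (t / Real.pi) * z ^ (-2 : ℝ)) := by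
        rw [← ofReal_integral_eq_lintegral_ofReal hint]
        refine (ae_restrict_iff' measurableSet_Ioi).2 (Filter.Eventually.of_forall ?_)
        intro z hz
        have : 0 < z := hd.trans hz
        positivity
    _ = ENNReal.ofReal (t / Real.pi / d) := by
        rw [MeasureTheory.integral_const_mul, integral_Ioi_rpow_of_lt (by norm_num) hd]
        norm_num
        rw [Real.rpow_neg_one d]
        rw [div_eq_mul_inv (t / Real.pi)]

/-- Two-sided tail estimate: mass of the Poisson kernel at distance `≥ d`. -/
lemma lintegral_tail_poissonKernel {t d : ℝ} (ht : 0 < t) (hd : 0 ≤ d) :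
    ∫⁻ z in {z : ℝ | d ≤ |z|}, ENNReal.ofReal (poissonKernelR t z)
      ≤ ENNReal.ofReal (2 * t / (t + d)) := by
  rcases le_or_gt d t with hdt | htd
  · -- d ≤ t : use total mass 1
    calc ∫⁻ z in {z : ℝ | d ≤ |z|}, ENNReal.ofReal (poissonKernelR t z)
        ≤ ∫⁻ z, ENNReal.ofReal (poissonKernelR t z) := setLIntegral_le_lintegral _ _
      _ = 1 := lintegral_poissonKernel ht
      _ ≤ ENNReal.ofReal (2 * t / (t + d)) := by
          rw [ENNReal.one_le_ofReal]
          rw [le_div_iff₀ (by linarith)]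
          linarith
  · -- t < d
    have hd0 : 0 < d := ht.trans htd
    have hsub : {z : ℝ | d ≤ |z|} ⊆ Iic (-d) ∪ Ici d := by
      intro z hz
      rcases le_abs.1 (show d ≤ |z| from hz) with h | h
      · exact Or.inr h
      · exact Or.inl (by simpa using neg_le_neg h)
    have hIci : ∫⁻ z in Ici d, ENNReal.ofReal (poissonKernelR t z)
        ≤ ENNReal.ofReal (t / Real.pi / d) := by
      rw [setLIntegral_congr (Filter.EventuallyEq.symm Ioi_ae_eq_Ici)]
      exact lintegral_Ioi_poissonKernel ht hd0
    have hIic : ∫⁻ z in Iic (-d), ENNReal.ofReal (poissonKernelR t z)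
        ≤ ENNReal.ofReal (t / Real.pi / d) := by
      have hmp : MeasurePreserving (fun z : ℝ => -z) volume volume :=
        Measure.measurePreserving_neg volume
      have hemb : MeasurableEmbedding (fun z : ℝ => -z) :=
        (Homeomorph.neg ℝ).measurableEmbedding
      have hpre : (fun z : ℝ => -z) ⁻¹' (Iic (-d)) = Ici d := by
        ext z; simp
      have := hmp.setLIntegral_comp_preimage_emb hemb
        (fun z => ENNReal.ofReal (poissonKernelR t z)) (Iic (-d))
      rw [hpre] at this
      rw [← this]
      simp_rw [poissonKernel_neg]
      exact hIci
    calc ∫⁻ z in {z : ℝ | d ≤ |z|}, ENNReal.ofReal (poissonKernelR t z)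
        ≤ ∫⁻ z in Iic (-d) ∪ Ici d, ENNReal.ofReal (poissonKernelR t z) :=
          lintegral_mono_set hsub
      _ ≤ (∫⁻ z in Iic (-d), ENNReal.ofReal (poissonKernelR t z))
            + ∫⁻ z in Ici d, ENNReal.ofReal (poissonKernelR t z) :=
          lintegral_union_le _ _ _
      _ ≤ ENNReal.ofReal (t / Real.pi / d) + ENNReal.ofReal (t / Real.pi / d) :=
          add_le_add hIic hIci
      _ = ENNReal.ofReal (2 * (t / Real.pi / d)) := by
          rw [← ENNReal.ofReal_add (by positivity) (by positivity)]
          ring_nf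
      _ ≤ ENNReal.ofReal (2 * t / (t + d)) := by
          apply ENNReal.ofReal_le_ofReal
          rw [show 2 * (t / Real.pi / d) = 2 * t / (Real.pi * d) by ring]
          apply div_le_div_of_nonneg_left (by positivity) (by linarith) ?_
          nlinarith [Real.pi_gt_three]

/-- Kernel mass over a set at distance `≥ d` from `x`. -/
lemma lintegral_poissonKernel_le {t d : ℝ} (ht : 0 < t) (hd : 0 ≤ d) {S : Set ℝ} {x : ℝ}
    (hS : MeasurableSet S) (h : ∀ y ∈ S, d ≤ |x - y|) :
    ∫⁻ y in S, ENNReal.ofReal (poissonKernelR t (x - y))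
      ≤ ENNReal.ofReal (2 * t / (t + d)) := by
  set G : ℝ → ℝ≥0∞ := fun z =>
    ({z : ℝ | d ≤ |z|}).indicator (fun z => ENNReal.ofReal (poissonKernelR t z)) z with hG
  have hGset : MeasurableSet {z : ℝ | d ≤ |z|} :=
    measurableSet_le measurable_const (_root_.continuous_abs.measurable)
  have hGmeas : Measurable G :=
    (((measurable_poissonKernel t).ennreal_ofReal)).indicator hGset
  have step1 : ∫⁻ y in S, ENNReal.ofReal (poissonKernelR t (x - y)) ≤ ∫⁻ y, G (x - y) := by
    rw [← lintegral_indicator hS]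
    refine lintegral_mono fun y => ?_
    by_cases hy : y ∈ S
    · rw [Set.indicator_of_mem hy, hG]
      have : x - y ∈ {z : ℝ | d ≤ |z|} := h y hy
      simp only []
      rw [Set.indicator_of_mem this]
    · rw [Set.indicator_of_notMem hy]; exact zero_le
  have step2 : ∫⁻ y, G (x - y) = ∫⁻ z, G z :=
    (Measure.measurePreserving_sub_left volume x).lintegral_comp hGmeas
  have step3 : ∫⁻ z, G z ≤ ENNReal.ofReal (2 * t / (t + d)) := by
    rw [hG, lintegral_indicator hGset]
    exact lintegral_tail_poissonKernel ht hd
  exact step1.trans (step2.trans_le step3)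

lemma schur_bound {t d : ℝ} (ht : 0 < t) (hd : 0 ≤ d) {E F : Set ℝ}
    (hE : MeasurableSet E) (hF : MeasurableSet F)
    (hdist : ∀ y ∈ E, ∀ x ∈ F, d ≤ |x - y|) {g : ℝ → ℂ}
    (hg : StronglyMeasurable g) (hgE : ∀ y, y ∉ E → g y = 0) :
    eLpNorm (F.indicator fun x => ∫ y, (poissonKernelR t (x - y) : ℂ) * g y) 2 volume
      ≤ ENNReal.ofReal (2 * t / (t + d)) * eLpNorm g 2 volume := by
  set A : ℝ≥0∞ := ENNReal.ofReal (2 * t / (t + d)) with hA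
  have hAtop : A ≠ ⊤ := ENNReal.ofReal_ne_top
  set Kf : ℝ → ℝ≥0∞ := fun z => ENNReal.ofReal (poissonKernelR t z) with hKf
  have hKmeas : Measurable Kf := (measurable_poissonKernel t).ennreal_ofReal
  set φ : ℝ → ℝ≥0∞ := fun y => (‖g y‖₊ : ℝ≥0∞) with hφ
  have hφmeas : Measurable φ := hg.measurable.nnnorm.coe_nnreal_ennreal
  set T : ℝ → ℂ := fun x => ∫ y, (poissonKernelR t (x - y) : ℂ) * g y with hT
  set W : ℝ → ℝ≥0∞ := fun x => ∫⁻ y in E, Kf (x - y) * φ y ^ (2:ℝ) with hW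
  -- pointwise bound for x ∈ F
  have hpoint : ∀ x ∈ F, (‖T x‖₊ : ℝ≥0∞) ^ (2:ℝ) ≤ A * W x := by
    intro x hx
    have h1 : (‖T x‖₊ : ℝ≥0∞) ≤ ∫⁻ y, Kf (x - y) * φ y := by
      refine (enorm_integral_le_lintegral_enorm _).trans_eq ?_
      congr 1
      funext y
      change (‖(poissonKernelR t (x - y) : ℂ) * g y‖₊ : ℝ≥0∞) = _
      rw [nnnorm_mul, ENNReal.coe_mul, Complex.nnnorm_real,
        ← enorm_eq_nnnorm, Real.enorm_eq_ofReal (poissonKernel_nonneg ht _)]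
    have h2 : ∫⁻ y, Kf (x - y) * φ y = ∫⁻ y in E, Kf (x - y) * φ y := by
      rw [← lintegral_indicator hE]
      congr 1
      funext y
      by_cases hy : y ∈ E
      · rw [Set.indicator_of_mem hy]
      · rw [Set.indicator_of_notMem hy, hφ]
        simp [hgE y hy]
    have h3 : ∫⁻ y in E, Kf (x - y) * φ y
        ≤ (∫⁻ y in E, Kf (x - y)) ^ ((1:ℝ)/2) * (W x) ^ ((1:ℝ)/2) := by
      have hhalf : ∀ a : ℝ≥0∞, a ^ ((1:ℝ)/2) * a ^ ((1:ℝ)/2) = a := by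
        intro a
        rw [← ENNReal.rpow_add_of_nonneg _ _ (by norm_num) (by norm_num)]
        norm_num
      have hconj : (2:ℝ).HolderConjugate 2 := Real.HolderConjugate.two_two
      have hm1 : AEMeasurable (fun y => Kf (x - y) ^ ((1:ℝ)/2)) (volume.restrict E) :=
        ((hKmeas.comp (measurable_const.sub measurable_id)).pow_const _).aemeasurable
      have hm2 : AEMeasurable (fun y => Kf (x - y) ^ ((1:ℝ)/2) * φ y) (volume.restrict E) :=
        (((hKmeas.comp (measurable_const.sub measurable_id)).pow_const _).mul
          hφmeas).aemeasurable
      have := ENNReal.lintegral_mul_le_Lp_mul_Lq (volume.restrict E) hconj hm1 hm2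
      calc ∫⁻ y in E, Kf (x - y) * φ y
          = ∫⁻ y in E, ((fun y => Kf (x - y) ^ ((1:ℝ)/2)) *
              fun y => Kf (x - y) ^ ((1:ℝ)/2) * φ y) y := by
            congr 1; funext y
            simp only [Pi.mul_apply]
            rw [← mul_assoc, hhalf]
        _ ≤ (∫⁻ y in E, (Kf (x - y) ^ ((1:ℝ)/2)) ^ (2:ℝ)) ^ ((1:ℝ)/2) *
              (∫⁻ y in E, (Kf (x - y) ^ ((1:ℝ)/2) * φ y) ^ (2:ℝ)) ^ ((1:ℝ)/2) := this
        _ = (∫⁻ y in E, Kf (x - y)) ^ ((1:ℝ)/2) * (W x) ^ ((1:ℝ)/2) := by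
            have e1 : ∀ a : ℝ≥0∞, (a ^ ((1:ℝ)/2)) ^ (2:ℝ) = a := by
              intro a
              rw [← ENNReal.rpow_mul]
              norm_num
            congr 1
            · congr 1
              exact lintegral_congr fun y => e1 _
            · congr 1
              rw [hW]
              exact lintegral_congr fun y => by
                rw [ENNReal.mul_rpow_of_nonneg _ _ (by norm_num), e1]
    have h4 : ∫⁻ y in E, Kf (x - y) ≤ A :=
      lintegral_poissonKernel_le ht hd hE fun y hy => hdist y hy x hx
    calc (‖T x‖₊ : ℝ≥0∞) ^ (2:ℝ)
        ≤ (A ^ ((1:ℝ)/2) * (W x) ^ ((1:ℝ)/2)) ^ (2:ℝ) := by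
          apply ENNReal.rpow_le_rpow _ (by norm_num)
          refine (h1.trans_eq h2).trans (h3.trans ?_)
          exact mul_le_mul_left (ENNReal.rpow_le_rpow h4 (by norm_num)) _
      _ = A * W x := by
          rw [ENNReal.mul_rpow_of_nonneg _ _ (by norm_num)]
          have e1 : ∀ a : ℝ≥0∞, (a ^ ((1:ℝ)/2)) ^ (2:ℝ) = a := by
            intro a; rw [← ENNReal.rpow_mul]; norm_num
          rw [e1, e1]
  -- integration step
  have hc2 : ∀ y : ℝ, φ y ^ (2:ℝ) ≠ ⊤ := fun y =>
    ENNReal.rpow_ne_top_of_nonneg (by norm_num) ENNReal.coe_ne_top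
  have hswap : ∫⁻ x in F, W x = ∫⁻ y in E, φ y ^ (2:ℝ) * ∫⁻ x in F, Kf (x - y) := by
    rw [hW]
    have hmp : AEMeasurable (Function.uncurry fun x y => Kf (x - y) * φ y ^ (2:ℝ))
        ((volume.restrict F).prod (volume.restrict E)) := by
      have : Function.uncurry (fun x y => Kf (x - y) * φ y ^ (2:ℝ))
          = fun p : ℝ × ℝ => Kf (p.1 - p.2) * φ p.2 ^ (2:ℝ) := rfl
      rw [this]
      exact ((hKmeas.comp (measurable_fst.sub measurable_snd)).mul
        ((hφmeas.comp measurable_snd).pow_const _)).aemeasurable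
    rw [lintegral_lintegral_swap hmp]
    refine lintegral_congr fun y => ?_
    calc ∫⁻ x in F, Kf (x - y) * φ y ^ (2:ℝ)
        = ∫⁻ x in F, φ y ^ (2:ℝ) * Kf (x - y) := lintegral_congr fun x => mul_comm _ _
      _ = φ y ^ (2:ℝ) * ∫⁻ x in F, Kf (x - y) := lintegral_const_mul' _ _ (hc2 y)
  have hinner : ∀ y ∈ E, ∫⁻ x in F, Kf (x - y) ≤ A := by
    intro y hy
    have heq : ∀ x : ℝ, Kf (x - y) = Kf (y - x) := by
      intro x
      rw [hKf]
      simp only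
      rw [← poissonKernel_neg, neg_sub]
    simp_rw [heq]
    exact lintegral_poissonKernel_le ht hd hF fun x hx =>
      (abs_sub_comm x y) ▸ hdist y hy x hx
  set N : ℝ≥0∞ := ∫⁻ y, φ y ^ (2:ℝ) with hN
  have hI : ∫⁻ x in F, (‖T x‖₊ : ℝ≥0∞) ^ (2:ℝ) ≤ A * (A * N) := by
    calc ∫⁻ x in F, (‖T x‖₊ : ℝ≥0∞) ^ (2:ℝ)
        ≤ ∫⁻ x in F, A * W x := by
          refine lintegral_mono_ae ((ae_restrict_iff' hF).2 ?_)
          exact Filter.Eventually.of_forall hpoint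
      _ = A * ∫⁻ x in F, W x := lintegral_const_mul' _ _ hAtop
      _ = A * ∫⁻ y in E, φ y ^ (2:ℝ) * ∫⁻ x in F, Kf (x - y) := by rw [hswap]
      _ ≤ A * (A * N) := by
          apply mul_le_mul_right
          calc ∫⁻ y in E, φ y ^ (2:ℝ) * ∫⁻ x in F, Kf (x - y)
              ≤ ∫⁻ y in E, φ y ^ (2:ℝ) * A := by
                refine lintegral_mono_ae ((ae_restrict_iff' hE).2 ?_)
                exact Filter.Eventually.of_forall fun y hy =>
                  mul_le_mul_right (hinner y hy) _
            _ = ∫⁻ y in E, A * φ y ^ (2:ℝ) :=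
                lintegral_congr fun y => mul_comm _ _
            _ = A * ∫⁻ y in E, φ y ^ (2:ℝ) := lintegral_const_mul' _ _ hAtop
            _ ≤ A * N := mul_le_mul_right (setLIntegral_le_lintegral _ _) _
  have hnorm_ind : ∫⁻ x, (‖F.indicator T x‖₊ : ℝ≥0∞) ^ (2:ℝ)
      = ∫⁻ x in F, (‖T x‖₊ : ℝ≥0∞) ^ (2:ℝ) := by
    rw [← lintegral_indicator hF]
    refine lintegral_congr fun x => ?_
    by_cases hx : x ∈ F
    · rw [Set.indicator_of_mem hx, Set.indicator_of_mem hx]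
    · rw [Set.indicator_of_notMem hx, Set.indicator_of_notMem hx]
      simp [ENNReal.zero_rpow_of_pos]
  rw [eLpNorm_eq_lintegral_rpow_enorm_toReal (by norm_num) (by norm_num),
    eLpNorm_eq_lintegral_rpow_enorm_toReal (by norm_num) (by norm_num)]
  simp only [ENNReal.toReal_ofNat, enorm_eq_nnnorm]
  rw [hnorm_ind]
  calc (∫⁻ x in F, (‖T x‖₊ : ℝ≥0∞) ^ (2:ℝ)) ^ ((1:ℝ)/2)
      ≤ (A * (A * N)) ^ ((1:ℝ)/2) := ENNReal.rpow_le_rpow hI (by norm_num)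
    _ = A * N ^ ((1:ℝ)/2) := by
        rw [← mul_assoc, ENNReal.mul_rpow_of_nonneg _ _ (by norm_num)]
        congr 1
        rw [show A * A = A ^ (2:ℝ) by rw [ENNReal.rpow_two, sq],
          ← ENNReal.rpow_mul]
        norm_num

/-- For every `K ∈ [0,1]` there is `C > 0` such that for all `t > 0`, Borel
sets `E, F ⊆ ℝ` and `f ∈ L²(ℝ,ℂ)`:
`‖χ_F ⬝ (p_t * (χ_E f))‖_{L²} ≤ C (1 + d(E,F)/t)^{-K} ‖χ_E f‖_{L²}`. -/
theorem stmt2 (K : ℝ) (hK0 : 0 ≤ K) (hK1 : K ≤ 1) :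
    ∃ C : ℝ, 0 < C ∧ ∀ t : ℝ, 0 < t → ∀ E F : Set ℝ, MeasurableSet E → MeasurableSet F →
      ∀ f : ℝ → ℂ, MemLp f 2 (volume : Measure ℝ) →
      eLpNorm (F.indicator fun x => ∫ y, (poissonKernelR t (x - y) : ℂ) * E.indicator f y)
          2 volume ≤
        ENNReal.ofReal (C * (1 + setDist E F / t) ^ (-K)) * eLpNorm (E.indicator f) 2 volume := by
  refine ⟨2, two_pos, ?_⟩
  intro t ht E F hE hF f hf
  set d := setDist E F with hd
  have hbdd : BddBelow (Set.image2 dist E F) := ⟨0, fun r hr => by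
    obtain ⟨a, -, b, -, rfl⟩ := hr
    exact dist_nonneg⟩
  have hd0 : 0 ≤ d := Real.sInf_nonneg fun r hr => by
    obtain ⟨a, -, b, -, rfl⟩ := hr
    exact dist_nonneg
  have hdist : ∀ y ∈ E, ∀ x ∈ F, d ≤ |x - y| := by
    intro y hy x hx
    have h := csInf_le hbdd (Set.mem_image2_of_mem hy hx)
    rw [Real.dist_eq] at h
    rwa [abs_sub_comm] at h
  set f' := hf.aestronglyMeasurable.mk f with hf'def
  have hf's : StronglyMeasurable f' := hf.aestronglyMeasurable.stronglyMeasurable_mk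
  have hff' : f =ᵐ[volume] f' := hf.aestronglyMeasurable.ae_eq_mk
  set g' : ℝ → ℂ := E.indicator f' with hg'
  have hg's : StronglyMeasurable g' := hf's.indicator hE
  have hgg' : E.indicator f =ᵐ[volume] g' := by
    filter_upwards [hff'] with y hy
    rw [hg']
    by_cases hE' : y ∈ E
    · rw [Set.indicator_of_mem hE', Set.indicator_of_mem hE', hy]
    · rw [Set.indicator_of_notMem hE', Set.indicator_of_notMem hE']
  have hg'E : ∀ y, y ∉ E → g' y = 0 := fun y hy => Set.indicator_of_notMem hy _
  have hinner : (fun x : ℝ => ∫ y, (poissonKernelR t (x - y) : ℂ) * E.indicator f y)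
      = fun x : ℝ => ∫ y, (poissonKernelR t (x - y) : ℂ) * g' y := by
    funext x
    apply integral_congr_ae
    filter_upwards [hgg'] with y hy
    rw [hy]
  rw [hinner, eLpNorm_congr_ae hgg']
  refine (schur_bound ht hd0 hE hF hdist hg's hg'E).trans ?_
  apply mul_le_mul_left
  apply ENNReal.ofReal_le_ofReal
  have hbase : (1:ℝ) ≤ 1 + d / t := by
    have : 0 ≤ d / t := div_nonneg hd0 ht.le
    linarith
  have h2 : 2 * t / (t + d) = 2 * (1 + d / t) ^ (-(1:ℝ)) := by
    rw [Real.rpow_neg_one, show (1 + d / t) = (t + d) / t by field_simp, inv_div]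
    ring
  rw [h2]
  have := Real.rpow_le_rpow_of_exponent_le hbase (show -(1:ℝ) ≤ -K by linarith)
  linarith
end

section
/- Let $K > 1$. Then for every constant $C > 0$ there exist $t > 0$, Borel sets $E, F \subseteq \mathbb{R}$ and $f \in L^2(\mathbb{R},\mathbb{C})$ such that $\|\chi_F \cdot (p_t * (\chi_E f))\|_{L^2} > C \left(1 + \frac{d(E,F)}{t}\right)^{-K} \|\chi_E f\|_{L^2}$. In other words, the Poisson convolution family $\{f \mapsto p_t * f\}_{t>0}$ does not satisfy $L^2$-$L^2$ off-diagonal estimates of any order $K > 1$. -/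
open MeasureTheory ENNReal

/-- For `K > 1` and every `C > 0` there are `t > 0`, Borel sets `E, F ⊆ ℝ`
and `f ∈ L²(ℝ,ℂ)` with
`‖χ_F ⬝ (p_t * (χ_E f))‖_{L²} > C (1 + d(E,F)/t)^{-K} ‖χ_E f‖_{L²}`:
the Poisson family satisfies no `L²-L²` off-diagonal estimates of order `K > 1`. -/
theorem stmt3 (K : ℝ) (hK : 1 < K) :
    ∀ C : ℝ, 0 < C → ∃ (t : ℝ) (E F : Set ℝ) (f : ℝ → ℂ), 0 < t ∧
      MeasurableSet E ∧ MeasurableSet F ∧ MemLp f 2 (volume : Measure ℝ) ∧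
      ENNReal.ofReal (C * (1 + setDist E F / t) ^ (-K)) * eLpNorm (E.indicator f) 2 volume <
        eLpNorm (F.indicator fun x => ∫ y, (poissonKernelR t (x - y) : ℂ) * E.indicator f y)
          2 volume := by
  intro C hC
  have hπ : (0:ℝ) < Real.pi := Real.pi_pos
  -- choose d large
  obtain ⟨d, hd, hd1⟩ : ∃ d : ℝ, 10 * Real.pi * C < d ^ (K - 1) ∧ 1 ≤ d := by
    have h := (tendsto_rpow_atTop (by linarith : (0:ℝ) < K - 1)).eventually_gt_atTop
      (10 * Real.pi * C)
    exact (h.and (Filter.eventually_ge_atTop 1)).exists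
  have hd0 : (0:ℝ) < d := by linarith
  set E : Set ℝ := Set.Icc (-d) 0 with hE
  set F : Set ℝ := Set.Icc d (2*d) with hF
  set f : ℝ → ℂ := E.indicator (fun _ => (1:ℂ)) with hf
  have hvolE : volume E = ENNReal.ofReal d := by
    rw [hE, Real.volume_Icc]; norm_num
  have hvolF : volume F = ENNReal.ofReal d := by
    rw [hF, Real.volume_Icc]; ring_nf
  have hvolEne : volume E ≠ ∞ := by rw [hvolE]; exact ofReal_ne_top
  have hindf : E.indicator f = E.indicator (fun _ => (1:ℂ)) := by
    rw [hf, Set.indicator_indicator, Set.inter_self]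
  refine ⟨1, E, F, f, one_pos, measurableSet_Icc, measurableSet_Icc,
    memLp_indicator_const 2 measurableSet_Icc 1 (Or.inr hvolEne), ?_⟩
  -- distance lower bound
  have hsd : d ≤ setDist E F := by
    apply le_csInf ⟨dist 0 d, Set.mem_image2_of_mem (by simp [hE, hd0.le]) (by simp [hF]; linarith)⟩
    rintro b ⟨x, hx, y, hy, rfl⟩
    rw [Real.dist_eq]
    have h1 : x ≤ 0 := hx.2
    have h2 : d ≤ y := hy.1
    rw [abs_sub_comm, abs_of_nonneg (by linarith)]
    linarith
  -- left norm
  have hp2 : ((2:ℝ≥0∞)).toReal = 2 := by norm_num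
  have hEnorm : eLpNorm (E.indicator f) 2 volume = (ENNReal.ofReal d) ^ ((1:ℝ)/2) := by
    rw [hindf, eLpNorm_indicator_const measurableSet_Icc (by norm_num) (by norm_num),
      hvolE, hp2]
    simp
  -- continuity and integrability of the kernel
  have hcont : Continuous (fun u : ℝ => poissonKernelR 1 u) := by
    unfold poissonKernelR
    exact continuous_const.mul (continuous_const.div (by continuity) (fun u => by positivity))
  have hIOn : ∀ x : ℝ, IntegrableOn (fun y => poissonKernelR 1 (x - y)) E volume := fun x =>
    (hcont.comp (continuous_const.sub continuous_id)).integrableOn_Icc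
  -- the convolution is a real integral
  have hint_eq : ∀ x : ℝ, (∫ y, (poissonKernelR 1 (x - y) : ℂ) * E.indicator f y)
      = ((∫ y in E, poissonKernelR 1 (x - y)) : ℝ) := by
    intro x
    have h1 : (fun y => (poissonKernelR 1 (x - y) : ℂ) * E.indicator f y)
        = E.indicator (fun y => ((poissonKernelR 1 (x - y) : ℝ) : ℂ)) := by
      funext y
      by_cases hy : y ∈ E
      · simp [hf, Set.indicator_of_mem hy]
      · simp [hf, Set.indicator_of_notMem hy]
    rw [h1, integral_indicator measurableSet_Icc, ← hE]
    exact integral_ofReal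
  -- lower bound for the convolution on F
  have hlow : ∀ x ∈ F, 1/(10*Real.pi*d) ≤ ∫ y in E, poissonKernelR 1 (x - y) := by
    intro x hx
    have hc : ∀ y ∈ E, 1/(Real.pi*(9*d^2+1)) ≤ poissonKernelR 1 (x - y) := by
      intro y hy
      have hy1 : -d ≤ y := hy.1
      have hy2 : y ≤ 0 := hy.2
      have hx1 : d ≤ x := hx.1
      have hx2 : x ≤ 2*d := hx.2
      unfold poissonKernelR
      have hA : (0:ℝ) < (x - y)^2 + 1^2 := by positivity
      have hAle : (x - y)^2 + 1^2 ≤ 9*d^2 + 1 := by nlinarith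
      rw [div_mul_div_comm, one_mul]
      exact one_div_le_one_div_of_le (by positivity)
        (mul_le_mul_of_nonneg_left hAle hπ.le)
    have key := setIntegral_ge_of_const_le measurableSet_Icc hvolEne hc (hIOn _)
    have hvol : volume.real (Set.Icc (-d) 0) = d := by
      rw [measureReal_def, ← hE, hvolE, toReal_ofReal hd0.le]
    rw [hvol] at key
    calc 1/(10*Real.pi*d) ≤ 1/(Real.pi*(9*d^2+1)) * d := by
          rw [div_mul_eq_mul_div, one_mul, div_le_div_iff₀ (by positivity) (by positivity)]
          nlinarith [mul_nonneg hπ.le (by nlinarith : (0:ℝ) ≤ d^2 - 1)]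
      _ ≤ _ := by rw [mul_comm, ← smul_eq_mul]; exact key
  -- compare with a constant on F
  set c0 : ℝ := 1/(10*Real.pi*d) with hc0
  have hc0pos : 0 < c0 := by positivity
  have hmono : eLpNorm (F.indicator fun _ => (c0:ℂ)) 2 volume
      ≤ eLpNorm (F.indicator fun x => ∫ y, (poissonKernelR 1 (x - y) : ℂ) * E.indicator f y)
        2 volume := by
    apply eLpNorm_mono
    intro x
    by_cases hx : x ∈ F
    · rw [Set.indicator_of_mem hx, Set.indicator_of_mem hx, hint_eq x]
      rw [Complex.norm_real, Complex.norm_real, Real.norm_eq_abs, Real.norm_eq_abs,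
        abs_of_pos hc0pos]
      exact le_trans (hlow x hx) (le_abs_self _)
    · simp [Set.indicator_of_notMem hx]
  have hFnorm : eLpNorm (F.indicator fun _ => (c0:ℂ)) 2 volume
      = ENNReal.ofReal c0 * (ENNReal.ofReal d) ^ ((1:ℝ)/2) := by
    rw [eLpNorm_indicator_const measurableSet_Icc (by norm_num) (by norm_num), hvolF, hp2]
    congr 1
    rw [← ofReal_norm, Complex.norm_real, Real.norm_eq_abs, abs_of_pos hc0pos]
  -- the key strict real inequality
  have hstrict : C * (1 + d) ^ (-K) < c0 := by
    rw [Real.rpow_neg (by linarith : (0:ℝ) ≤ 1 + d), hc0, ← div_eq_mul_inv,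
      div_lt_div_iff₀ (Real.rpow_pos_of_pos (by linarith) K) (by positivity)]
    have h1 : d ^ K = d ^ (K - 1) * d := by
      rw [← Real.rpow_add_one hd0.ne' (K - 1)]; ring_nf
    have h2 : d ^ K ≤ (1 + d) ^ K := Real.rpow_le_rpow hd0.le (by linarith) (by linarith)
    nlinarith
  -- finish
  have hrne0 : (ENNReal.ofReal d) ^ ((1:ℝ)/2) ≠ 0 :=
    (ENNReal.rpow_pos (ENNReal.ofReal_pos.mpr hd0) ofReal_ne_top).ne'
  have hrnetop : (ENNReal.ofReal d) ^ ((1:ℝ)/2) ≠ ∞ :=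
    ENNReal.rpow_ne_top_of_nonneg (by norm_num) ofReal_ne_top
  have hsdle : C * (1 + setDist E F / 1) ^ (-K) ≤ C * (1 + d) ^ (-K) := by
    rw [div_one]
    apply mul_le_mul_of_nonneg_left _ hC.le
    exact Real.rpow_le_rpow_of_nonpos (by linarith) (by linarith) (by linarith)
  calc ENNReal.ofReal (C * (1 + setDist E F / 1) ^ (-K)) * eLpNorm (E.indicator f) 2 volume
      = ENNReal.ofReal (C * (1 + setDist E F / 1) ^ (-K)) * (ENNReal.ofReal d) ^ ((1:ℝ)/2) := by
        rw [hEnorm]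
    _ ≤ ENNReal.ofReal (C * (1 + d) ^ (-K)) * (ENNReal.ofReal d) ^ ((1:ℝ)/2) :=
        mul_le_mul_left (ofReal_le_ofReal hsdle) _
    _ < ENNReal.ofReal c0 * (ENNReal.ofReal d) ^ ((1:ℝ)/2) := by
        exact ENNReal.mul_lt_mul_left hrne0 hrnetop
          ((ENNReal.ofReal_lt_ofReal_iff hc0pos).mpr hstrict)
    _ = eLpNorm (F.indicator fun _ => (c0:ℂ)) 2 volume := hFnorm.symm
    _ ≤ _ := hmono
end

section
/- For every $\nu \in (0, \pi/2)$ there exists a constant $C_\nu > 0$ such that for every $z \in S_\nu^o$ one has $1 + iz \ne 0$ and $\left| e^{-\tilde{z}} - \frac{1}{1+iz} \right| \le C_\nu \frac{|z|}{1 + |z|^2}$. -/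
open MeasureTheory ENNReal

/-- The open bisector `S_ν^o = {z ≠ 0 : |arg z| < ν or |arg (-z)| < ν}`. -/
def openBisector (ν : ℝ) : Set ℂ := {z | z ≠ 0 ∧ (|Complex.arg z| < ν ∨ |Complex.arg (-z)| < ν)}

/-- For `z` with `Re z ≠ 0`, `z̃ := z` if `Re z > 0` and `z̃ := -z` otherwise. -/
noncomputable def bisecTilde (z : ℂ) : ℂ := if 0 < z.re then z else -z

/-- Key sector estimate: if `|arg u| < ν < π/2` then `Re u ≥ cos ν ‖u‖` and
`|Im u| ≤ sin ν ‖u‖`. -/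
lemma sector_key {ν : ℝ} (hν0 : 0 < ν) (hν : ν < Real.pi / 2) {u : ℂ} (hu : u ≠ 0)
    (h : |Complex.arg u| < ν) :
    Real.cos ν * ‖u‖ ≤ u.re ∧ |u.im| ≤ Real.sin ν * ‖u‖ := by
  have hpi : Real.pi / 2 < Real.pi := by linarith [Real.pi_pos]
  have hn0 : ‖u‖ ≠ 0 := norm_ne_zero_iff.mpr hu
  have hre : u.re = Real.cos (Complex.arg u) * ‖u‖ := by
    have := Complex.cos_arg hu
    rw [_root_.eq_div_iff hn0] at this
    exact this.symm
  have him : u.im = Real.sin (Complex.arg u) * ‖u‖ := by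
    have := Complex.sin_arg u
    rw [_root_.eq_div_iff hn0] at this
    exact this.symm
  have hn : (0:ℝ) ≤ ‖u‖ := norm_nonneg u
  have hlt := abs_lt.mp h
  constructor
  · have hcos : Real.cos ν ≤ Real.cos (Complex.arg u) := by
      have h2 : Real.cos ν ≤ Real.cos |Complex.arg u| :=
        Real.cos_le_cos_of_nonneg_of_le_pi (abs_nonneg _) (by linarith) h.le
      rwa [Real.cos_abs] at h2
    rw [hre]
    exact mul_le_mul_of_nonneg_right hcos hn
  · have hsin : |Real.sin (Complex.arg u)| ≤ Real.sin ν := by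
      rw [abs_le]
      constructor
      · have h1 : Real.sin (-ν) ≤ Real.sin (Complex.arg u) :=
          Real.sin_le_sin_of_le_of_le_pi_div_two (by linarith) (by linarith) (by linarith)
        rwa [Real.sin_neg] at h1
      · exact Real.sin_le_sin_of_le_of_le_pi_div_two (by linarith) (by linarith) (by linarith)
    rw [him, abs_mul, abs_of_nonneg hn]
    exact mul_le_mul_of_nonneg_right hsin hn

set_option maxHeartbeats 800000 in
/-- For every `ν ∈ (0, π/2)` there is `C_ν > 0` such that for every
`z ∈ S_ν^o` one has `1 + iz ≠ 0` and `|e^{-z̃} - (1+iz)⁻¹| ≤ C_ν |z| / (1 + |z|²)`. -/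
theorem stmt4 (ν : ℝ) (hν0 : 0 < ν) (hν : ν < Real.pi / 2) :
    ∃ C : ℝ, 0 < C ∧ ∀ z ∈ openBisector ν, 1 + Complex.I * z ≠ 0 ∧
      ‖Complex.exp (-(bisecTilde z)) - (1 + Complex.I * z)⁻¹‖ ≤ C * ‖z‖ / (1 + ‖z‖ ^ 2) := by
  have hpi : Real.pi / 2 < Real.pi := by linarith [Real.pi_pos]
  set s := Real.sin ν with hs_def
  set c := Real.cos ν with hc_def
  have hc : 0 < c := Real.cos_pos_of_mem_Ioo ⟨by linarith, hν⟩
  have hs0 : 0 ≤ s := Real.sin_nonneg_of_nonneg_of_le_pi hν0.le (by linarith)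
  have hs1 : s < 1 := by
    have h1 : s ^ 2 + c ^ 2 = 1 := Real.sin_sq_add_cos_sq ν
    nlinarith
  set A := Real.sqrt (1 - s) with hA_def
  have hA : 0 < A := Real.sqrt_pos.mpr (by linarith)
  set C := 2 * (2 + 1 / A) + 2 / c + Real.sqrt 2 / A with hC_def
  have hK1 : 2 * (2 + 1 / A) ≤ C := by
    have h1 : 0 < 2 / c := by positivity
    have h2 : 0 < Real.sqrt 2 / A := by positivity
    linarith
  have hK2 : 2 / c + Real.sqrt 2 / A ≤ C := by
    have h1 : 0 < 2 * (2 + 1 / A) := by positivity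
    linarith
  refine ⟨C, by positivity, ?_⟩
  intro z hz
  obtain ⟨hz0, hcase⟩ := hz
  set r := ‖z‖ with hr_def
  have hr : 0 < r := norm_pos_iff.mpr hz0
  obtain ⟨hRe, hIm⟩ : c * r ≤ (bisecTilde z).re ∧ |z.im| ≤ s * r := by
    rcases hcase with h | h
    · obtain ⟨h1, h2⟩ := sector_key hν0 hν hz0 h
      have hzre : 0 < z.re := lt_of_lt_of_le (by positivity) h1
      rw [bisecTilde, if_pos hzre]
      exact ⟨h1, h2⟩
    · obtain ⟨h1, h2⟩ := sector_key hν0 hν (neg_ne_zero.mpr hz0) h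
      rw [norm_neg] at h1 h2
      have hzre : ¬ 0 < z.re := by
        have h3 : 0 < (-z).re := lt_of_lt_of_le (by positivity) h1
        simp only [Complex.neg_re] at h3
        linarith
      rw [bisecTilde, if_neg hzre]
      refine ⟨h1, ?_⟩
      rw [← abs_neg]
      simpa using h2
  have hsq : r ^ 2 = z.re ^ 2 + z.im ^ 2 := by
    rw [hr_def, Complex.sq_norm, Complex.normSq_apply]; ring
  have hnormsq : ‖1 + Complex.I * z‖ ^ 2 = (1 - z.im) ^ 2 + z.re ^ 2 := by
    rw [Complex.sq_norm, Complex.normSq_apply]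
    simp only [Complex.add_re, Complex.add_im, Complex.mul_re, Complex.mul_im,
      Complex.I_re, Complex.I_im, Complex.one_re, Complex.one_im]
    ring
  have him' : z.im ≤ s * r := (abs_le.mp hIm).2
  have hlow : (1 - s) * (1 + r ^ 2) ≤ ‖1 + Complex.I * z‖ ^ 2 := by
    rw [hnormsq]
    nlinarith [sq_nonneg (r - 1)]
  have hnpos : 0 < ‖1 + Complex.I * z‖ := by
    have h1 : 0 < ‖1 + Complex.I * z‖ ^ 2 := lt_of_lt_of_le (by nlinarith) hlow
    nlinarith [norm_nonneg (1 + Complex.I * z)]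
  have h1iz : 1 + Complex.I * z ≠ 0 := by
    intro h; rw [h] at hnpos; simp at hnpos
  refine ⟨h1iz, ?_⟩
  have hsqrtpos : 0 < Real.sqrt (1 + r ^ 2) := Real.sqrt_pos.mpr (by positivity)
  have hsqrt : A * Real.sqrt (1 + r ^ 2) ≤ ‖1 + Complex.I * z‖ := by
    have h1 := Real.sqrt_le_sqrt hlow
    rwa [Real.sqrt_mul (by linarith), Real.sqrt_sq hnpos.le] at h1
  have hinv : ‖(1 + Complex.I * z)⁻¹‖ ≤ 1 / (A * Real.sqrt (1 + r ^ 2)) := by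
    rw [norm_inv, inv_eq_one_div]
    exact one_div_le_one_div_of_le (by positivity) hsqrt
  have hrpos2 : (0:ℝ) < 1 + r ^ 2 := by positivity
  have hnormtilde : ‖bisecTilde z‖ = r := by
    rw [bisecTilde]; split <;> simp [hr_def]
  have hrdiv : 0 ≤ r / (1 + r ^ 2) := by positivity
  have hgoal : C * r / (1 + r ^ 2) = C * (r / (1 + r ^ 2)) := mul_div_assoc _ _ _
  rw [hgoal]
  rcases le_total r 1 with hr1 | hr1
  · -- small case
    have hb1 : ‖Complex.exp (-(bisecTilde z)) - 1‖ ≤ 2 * r := by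
      have h1 := Complex.norm_exp_sub_one_le (x := -(bisecTilde z))
        (by rw [norm_neg]; exact le_trans (le_of_eq hnormtilde) hr1)
      simpa [hnormtilde] using h1
    have hb2 : ‖(1:ℂ) - (1 + Complex.I * z)⁻¹‖ ≤ r / A := by
      have heq : (1:ℂ) - (1 + Complex.I * z)⁻¹ = (Complex.I * z) * (1 + Complex.I * z)⁻¹ := by
        field_simp
        ring
      rw [heq, norm_mul, norm_mul, Complex.norm_I, one_mul, ← hr_def]
      have hs1' : (1:ℝ) ≤ Real.sqrt (1 + r ^ 2) := by
        nlinarith [Real.sq_sqrt (show (0:ℝ) ≤ 1 + r ^ 2 by positivity),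
          Real.sqrt_nonneg (1 + r ^ 2)]
      calc r * ‖(1 + Complex.I * z)⁻¹‖ ≤ r * (1 / (A * Real.sqrt (1 + r ^ 2))) :=
            mul_le_mul_of_nonneg_left hinv hr.le
        _ ≤ r * (1 / (A * 1)) := by
            apply mul_le_mul_of_nonneg_left _ hr.le
            exact one_div_le_one_div_of_le (by positivity)
              (mul_le_mul_of_nonneg_left hs1' hA.le)
        _ = r / A := by rw [mul_one, ← div_eq_mul_one_div]
    have htri : ‖Complex.exp (-(bisecTilde z)) - (1 + Complex.I * z)⁻¹‖ ≤
        ‖Complex.exp (-(bisecTilde z)) - 1‖ + ‖(1:ℂ) - (1 + Complex.I * z)⁻¹‖ :=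
      norm_sub_le_norm_sub_add_norm_sub _ 1 _
    have hle : ‖Complex.exp (-(bisecTilde z)) - (1 + Complex.I * z)⁻¹‖ ≤ (2 + 1 / A) * r := by
      have heq2 : 2 * r + r / A = (2 + 1 / A) * r := by
        rw [div_eq_mul_one_div]; ring
      linarith [le_trans htri (add_le_add hb1 hb2)]
    apply hle.trans
    have hdd : r / 2 ≤ r / (1 + r ^ 2) := by
      apply div_le_div_of_nonneg_left hr.le hrpos2
      nlinarith
    have hB : 0 ≤ 2 + 1 / A := by positivity
    calc (2 + 1 / A) * r = 2 * (2 + 1 / A) * (r / 2) := by ring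
      _ ≤ 2 * (2 + 1 / A) * (r / (1 + r ^ 2)) := by
          apply mul_le_mul_of_nonneg_left hdd (by positivity)
      _ ≤ C * (r / (1 + r ^ 2)) := mul_le_mul_of_nonneg_right hK1 hrdiv
  · -- large case
    have hb1 : ‖Complex.exp (-(bisecTilde z))‖ ≤ (2 / c) * (r / (1 + r ^ 2)) := by
      rw [Complex.norm_exp]
      simp only [Complex.neg_re]
      have h1 : Real.exp (-(bisecTilde z).re) ≤ Real.exp (-(c * r)) :=
        Real.exp_le_exp.mpr (by linarith)
      have hcr : 0 < c * r := by positivity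
      have h2 : Real.exp (-(c * r)) ≤ 1 / (c * r) := by
        rw [Real.exp_neg, inv_eq_one_div]
        apply one_div_le_one_div_of_le hcr
        linarith [Real.add_one_le_exp (c * r)]
      have h3 : 1 / (c * r) ≤ (2 / c) * (r / (1 + r ^ 2)) := by
        rw [div_mul_div_comm, div_le_div_iff₀ hcr (by positivity)]
        nlinarith
      linarith
    have hb2 : ‖(1 + Complex.I * z)⁻¹‖ ≤ (Real.sqrt 2 / A) * (r / (1 + r ^ 2)) := by
      apply hinv.trans
      have hkey : Real.sqrt (1 + r ^ 2) ≤ Real.sqrt 2 * r := by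
        calc Real.sqrt (1 + r ^ 2) ≤ Real.sqrt (2 * r ^ 2) :=
              Real.sqrt_le_sqrt (by nlinarith)
          _ = Real.sqrt 2 * r := by
              rw [Real.sqrt_mul (by norm_num), Real.sqrt_sq hr.le]
      rw [div_mul_div_comm, div_le_div_iff₀ (by positivity) (by positivity)]
      have hmul : Real.sqrt (1 + r ^ 2) * Real.sqrt (1 + r ^ 2) = 1 + r ^ 2 :=
        Real.mul_self_sqrt (by positivity)
      calc (1:ℝ) * (A * (1 + r ^ 2)) = A * (Real.sqrt (1 + r ^ 2) * Real.sqrt (1 + r ^ 2)) := by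
            rw [hmul]; ring
        _ ≤ A * (Real.sqrt 2 * r * Real.sqrt (1 + r ^ 2)) := by
            apply mul_le_mul_of_nonneg_left _ hA.le
            exact mul_le_mul_of_nonneg_right hkey hsqrtpos.le
        _ = Real.sqrt 2 * r * (A * Real.sqrt (1 + r ^ 2)) := by ring
    have htri : ‖Complex.exp (-(bisecTilde z)) - (1 + Complex.I * z)⁻¹‖ ≤
        ‖Complex.exp (-(bisecTilde z))‖ + ‖(1 + Complex.I * z)⁻¹‖ := norm_sub_le _ _
    calc ‖Complex.exp (-(bisecTilde z)) - (1 + Complex.I * z)⁻¹‖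
        ≤ (2 / c) * (r / (1 + r ^ 2)) + (Real.sqrt 2 / A) * (r / (1 + r ^ 2)) :=
          le_trans htri (add_le_add hb1 hb2)
      _ = (2 / c + Real.sqrt 2 / A) * (r / (1 + r ^ 2)) := by ring
      _ ≤ C * (r / (1 + r ^ 2)) := mul_le_mul_of_nonneg_right hK2 hrdiv
end

section
/- Let $M > 0$, $\tau > 0$ and $K > M$. There exists a constant $C > 0$ such that for all $x \ge 0$ and all $t \ge r > 0$: $\int_0^\infty \min(s^M, 1)\, \min\!\left(1, \left(\frac{t s}{r}\right)^{-\tau}\right) (1 + x s)^{-K}\, \frac{ds}{s} \le C\, (1+x)^{-M}$. -/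
open MeasureTheory

/-- For `M > 0`, `τ > 0` and `K > M` there is `C > 0` such that for all
`x ≥ 0` and `t ≥ r > 0`:
`∫₀^∞ min(s^M, 1) min(1, (ts/r)^{-τ}) (1 + xs)^{-K} ds/s ≤ C (1+x)^{-M}`. -/
theorem stmt9 (M τ K : ℝ) (hM : 0 < M) (hτ : 0 < τ) (hK : M < K) :
    ∃ C : ℝ, 0 < C ∧ ∀ x : ℝ, 0 ≤ x → ∀ t r : ℝ, 0 < r → r ≤ t →
      (∫ s in Set.Ioi (0 : ℝ),
          min (s ^ M) 1 * min 1 ((t * s / r) ^ (-τ)) * (1 + x * s) ^ (-K) / s) ≤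
        C * (1 + x) ^ (-M) := by
  have hKM : 0 < K - M := by linarith
  refine ⟨1 / M + 1 / (K - M) + 1 / τ, by positivity, ?_⟩
  intro x hx t r hr hrt
  have hx1 : (1 : ℝ) ≤ 1 + x := by linarith
  have hx0 : (0 : ℝ) < 1 + x := by linarith
  set a : ℝ := (1 + x)⁻¹ with ha_def
  have ha0 : 0 < a := by positivity
  have ha1 : a ≤ 1 := by
    rw [ha_def]
    exact inv_le_one_of_one_le₀ hx1
  have hapow : ∀ u : ℝ, a ^ u = (1 + x) ^ (-u) := by
    intro u
    rw [ha_def, ← Real.rpow_neg_one (1 + x), ← Real.rpow_mul hx0.le]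
    ring_nf
  -- the dominating function
  set g1 : ℝ → ℝ := fun s => s ^ (M - 1) with hg1_def
  set g2 : ℝ → ℝ := fun s => (1 + x) ^ (-K) * s ^ (M - K - 1) with hg2_def
  set g3 : ℝ → ℝ := fun s => (1 + x) ^ (-K) * s ^ (-τ - 1) with hg3_def
  set g : ℝ → ℝ := fun s =>
    (Set.Ioc (0 : ℝ) a).indicator g1 s + (Set.Ioc a 1).indicator g2 s
      + (Set.Ioi (1 : ℝ)).indicator g3 s with hg_def
  -- integrability
  have hint1 : Integrable ((Set.Ioc (0 : ℝ) a).indicator g1) := by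
    refine IntegrableOn.integrable_indicator ?_ measurableSet_Ioc
    have := intervalIntegral.intervalIntegrable_rpow' (a := 0) (b := a) (r := M - 1)
      (by linarith)
    rwa [intervalIntegrable_iff_integrableOn_Ioc_of_le ha0.le] at this
  have hint2 : Integrable ((Set.Ioc a (1 : ℝ)).indicator g2) := by
    refine IntegrableOn.integrable_indicator ?_ measurableSet_Ioc
    have h0 : (0 : ℝ) ∉ Set.uIcc a 1 := by
      rw [Set.uIcc_of_le ha1]
      intro h
      exact absurd h.1 (by linarith)
    have := (intervalIntegral.intervalIntegrable_rpow (μ := volume) (a := a) (b := 1)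
      (r := M - K - 1) (Or.inr h0))
    rw [intervalIntegrable_iff_integrableOn_Ioc_of_le ha1] at this
    exact this.const_mul _
  have hint3 : Integrable ((Set.Ioi (1 : ℝ)).indicator g3) := by
    refine IntegrableOn.integrable_indicator ?_ measurableSet_Ioi
    exact (integrableOn_Ioi_rpow_of_lt (by linarith) one_pos).const_mul _
  have hgint : Integrable g := (hint1.add hint2).add hint3
  -- pointwise bound
  have hbound : ∀ s ∈ Set.Ioi (0 : ℝ),
      min (s ^ M) 1 * min 1 ((t * s / r) ^ (-τ)) * (1 + x * s) ^ (-K) / s ≤ g s := by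
    intro s hs
    rw [Set.mem_Ioi] at hs
    have hxs1 : (1 : ℝ) ≤ 1 + x * s := by nlinarith
    have hxs0 : (0 : ℝ) < 1 + x * s := by linarith
    have hmin1 : 0 ≤ min (s ^ M) 1 := le_min (Real.rpow_nonneg hs.le _) zero_le_one
    have hmin2 : 0 ≤ min 1 ((t * s / r) ^ (-τ)) :=
      le_min zero_le_one (Real.rpow_nonneg (div_nonneg (mul_nonneg (by linarith) hs.le) hr.le) _)
    have hpK : (0:ℝ) ≤ (1 + x * s) ^ (-K) := Real.rpow_nonneg hxs0.le _
    have hpow_le_one : (1 + x * s) ^ (-K) ≤ 1 :=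
      Real.rpow_le_one_of_one_le_of_nonpos hxs1 (by linarith)
    rcases le_or_gt s a with hsa | hsa
    · -- small s
      have hmem : s ∈ Set.Ioc (0 : ℝ) a := ⟨hs, hsa⟩
      have h2 : s ∉ Set.Ioc a 1 := fun h => absurd h.1 (not_lt.mpr hsa)
      have h3 : s ∉ Set.Ioi (1 : ℝ) := fun h => absurd (Set.mem_Ioi.mp h)
        (not_lt.mpr (hsa.trans ha1))
      rw [hg_def]
      simp only [Set.indicator_of_mem hmem, Set.indicator_of_notMem h2,
        Set.indicator_of_notMem h3, add_zero]
      have : min (s ^ M) 1 * min 1 ((t * s / r) ^ (-τ)) * (1 + x * s) ^ (-K) / s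
          ≤ s ^ M * 1 * 1 / s := by
        gcongr ?_ * ?_ * ?_ / _ <;>
          first | exact min_le_left _ _ | exact min_le_right _ _ | assumption
      refine this.trans_eq ?_
      simp only [hg1_def]
      rw [mul_one, mul_one, Real.rpow_sub hs, Real.rpow_one]
    · rcases le_or_gt s 1 with hs1 | hs1
      · -- middle s
        have hmem : s ∈ Set.Ioc a 1 := ⟨hsa, hs1⟩
        have h1 : s ∉ Set.Ioc (0 : ℝ) a := fun h => absurd h.2 (not_le.mpr hsa)
        have h3 : s ∉ Set.Ioi (1 : ℝ) := fun h => absurd (Set.mem_Ioi.mp h) (not_lt.mpr hs1)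
        rw [hg_def]
        simp only [Set.indicator_of_mem hmem, Set.indicator_of_notMem h1,
          Set.indicator_of_notMem h3, add_zero, zero_add]
        have hb : s * (1 + x) ≤ 1 + x * s := by nlinarith
        have hkey : (1 + x * s) ^ (-K) ≤ s ^ (-K) * (1 + x) ^ (-K) := by
          have := Real.rpow_le_rpow_of_nonpos (by positivity) hb (by linarith : -K ≤ 0)
          rwa [Real.mul_rpow hs.le hx0.le] at this
        have : min (s ^ M) 1 * min 1 ((t * s / r) ^ (-τ)) * (1 + x * s) ^ (-K) / s
            ≤ s ^ M * 1 * (s ^ (-K) * (1 + x) ^ (-K)) / s := by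
          gcongr ?_ * ?_ * ?_ / _ <;>
            first | exact min_le_left _ _ | exact min_le_right _ _ | assumption
        refine this.trans_eq ?_
        simp only [hg2_def]
        rw [mul_one]
        have : s ^ M * (s ^ (-K) * (1 + x) ^ (-K)) / s
            = (1 + x) ^ (-K) * (s ^ M * s ^ (-K) / s) := by ring
        have h2 : s ^ M * s ^ (-K) / s = s ^ (M - K - 1) := by
          rw [show M - K - 1 = M + -K - 1 from by ring, Real.rpow_sub hs,
            Real.rpow_add hs, Real.rpow_one]
        rw [this, h2]
      · -- large s
        have hmem : s ∈ Set.Ioi (1 : ℝ) := hs1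
        have h1 : s ∉ Set.Ioc (0 : ℝ) a := fun h => absurd h.2 (not_le.mpr (ha1.trans_lt hs1))
        have h2 : s ∉ Set.Ioc a 1 := fun h => absurd h.2 (not_le.mpr hs1)
        rw [hg_def]
        simp only [Set.indicator_of_mem hmem, Set.indicator_of_notMem h1,
          Set.indicator_of_notMem h2, zero_add]
        have hts : s ≤ t * s / r := by
          rw [le_div_iff₀ hr]
          nlinarith
        have hkey2 : min 1 ((t * s / r) ^ (-τ)) ≤ s ^ (-τ) :=
          (min_le_right _ _).trans
            (Real.rpow_le_rpow_of_nonpos hs hts (by linarith : -τ ≤ 0))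
        have hkey3 : (1 + x * s) ^ (-K) ≤ (1 + x) ^ (-K) := by
          refine Real.rpow_le_rpow_of_nonpos hx0 (by nlinarith) (by linarith)
        have : min (s ^ M) 1 * min 1 ((t * s / r) ^ (-τ)) * (1 + x * s) ^ (-K) / s
            ≤ 1 * s ^ (-τ) * (1 + x) ^ (-K) / s := by
          gcongr ?_ * ?_ * ?_ / _ <;>
            first | exact min_le_right _ _ | exact min_le_left _ _ | assumption
        refine this.trans_eq ?_
        simp only [hg3_def]
        rw [one_mul]
        have : s ^ (-τ) * (1 + x) ^ (-K) / s = (1 + x) ^ (-K) * (s ^ (-τ) / s) := by ring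
        rw [this, Real.rpow_sub hs, Real.rpow_one]
  -- compare integrals
  have hmono : (∫ s in Set.Ioi (0 : ℝ),
      min (s ^ M) 1 * min 1 ((t * s / r) ^ (-τ)) * (1 + x * s) ^ (-K) / s)
      ≤ ∫ s in Set.Ioi (0 : ℝ), g s := by
    refine integral_mono_of_nonneg ?_ hgint.restrict ?_
    · filter_upwards [ae_restrict_mem measurableSet_Ioi] with s hs
      rw [Set.mem_Ioi] at hs
      have hmin1 : 0 ≤ min (s ^ M) 1 := le_min (Real.rpow_nonneg hs.le _) zero_le_one
      have hmin2 : 0 ≤ min 1 ((t * s / r) ^ (-τ)) :=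
        le_min zero_le_one (Real.rpow_nonneg (div_nonneg (mul_nonneg (by linarith) hs.le) hr.le) _)
      have hxs : (0:ℝ) < 1 + x * s := by nlinarith
      exact div_nonneg (mul_nonneg (mul_nonneg hmin1 hmin2) (Real.rpow_nonneg hxs.le _)) hs.le
    · filter_upwards [ae_restrict_mem measurableSet_Ioi] with s hs
      exact hbound s hs
  refine hmono.trans ?_
  -- compute the integral of g
  have hsub1 : Set.Ioc (0 : ℝ) a ⊆ Set.Ioi (0 : ℝ) := Set.Ioc_subset_Ioi_self
  have hsub2 : Set.Ioc a (1 : ℝ) ⊆ Set.Ioi (0 : ℝ) := fun y hy => ha0.trans hy.1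
  have hsub3 : Set.Ioi (1 : ℝ) ⊆ Set.Ioi (0 : ℝ) := fun y hy => Set.mem_Ioi.mpr (one_pos.trans (Set.mem_Ioi.mp hy))
  have e1 : (∫ s in Set.Ioi (0 : ℝ), (Set.Ioc (0 : ℝ) a).indicator g1 s)
      = ∫ s in Set.Ioc (0 : ℝ) a, g1 s := by
    rw [integral_indicator measurableSet_Ioc, Measure.restrict_restrict measurableSet_Ioc,
      Set.inter_eq_left.mpr hsub1]
  have e2 : (∫ s in Set.Ioi (0 : ℝ), (Set.Ioc a (1 : ℝ)).indicator g2 s)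
      = ∫ s in Set.Ioc a (1 : ℝ), g2 s := by
    rw [integral_indicator measurableSet_Ioc, Measure.restrict_restrict measurableSet_Ioc,
      Set.inter_eq_left.mpr hsub2]
  have e3 : (∫ s in Set.Ioi (0 : ℝ), (Set.Ioi (1 : ℝ)).indicator g3 s)
      = ∫ s in Set.Ioi (1 : ℝ), g3 s := by
    rw [integral_indicator measurableSet_Ioi, Measure.restrict_restrict measurableSet_Ioi,
      Set.inter_eq_left.mpr hsub3]
  have hsplit : (∫ s in Set.Ioi (0 : ℝ), g s)
      = (∫ s in Set.Ioc (0 : ℝ) a, g1 s) + (∫ s in Set.Ioc a (1 : ℝ), g2 s)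
        + (∫ s in Set.Ioi (1 : ℝ), g3 s) := by
    have key1 : (∫ s in Set.Ioi (0 : ℝ), g s)
        = (∫ s in Set.Ioi (0 : ℝ),
            ((Set.Ioc (0 : ℝ) a).indicator g1 + (Set.Ioc a 1).indicator g2) s)
          + ∫ s in Set.Ioi (0 : ℝ), (Set.Ioi (1 : ℝ)).indicator g3 s :=
      integral_add ((hint1.add hint2).restrict) (hint3.restrict)
    have key2 : (∫ s in Set.Ioi (0 : ℝ),
            ((Set.Ioc (0 : ℝ) a).indicator g1 + (Set.Ioc a 1).indicator g2) s)
        = (∫ s in Set.Ioi (0 : ℝ), (Set.Ioc (0 : ℝ) a).indicator g1 s)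
          + ∫ s in Set.Ioi (0 : ℝ), (Set.Ioc a 1).indicator g2 s :=
      integral_add (hint1.restrict) (hint2.restrict)
    rw [key1, key2, e1, e2, e3]
  rw [hsplit]
  -- compute each piece
  have I1 : (∫ s in Set.Ioc (0 : ℝ) a, g1 s) = (1 + x) ^ (-M) / M := by
    simp only [hg1_def]
    rw [← intervalIntegral.integral_of_le ha0.le,
      integral_rpow (Or.inl (by linarith : (-1:ℝ) < M - 1))]
    rw [show M - 1 + 1 = M from by ring, Real.zero_rpow hM.ne', hapow M, sub_zero]
  have I2 : (∫ s in Set.Ioc a (1 : ℝ), g2 s) ≤ (1 + x) ^ (-M) / (K - M) := by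
    have h0 : (0 : ℝ) ∉ Set.uIcc a 1 := by
      rw [Set.uIcc_of_le ha1]
      intro h
      exact absurd h.1 (by linarith)
    have hval : (∫ s in Set.Ioc a (1 : ℝ), s ^ (M - K - 1))
        = (1 - a ^ (M - K)) / (M - K) := by
      rw [← intervalIntegral.integral_of_le ha1,
        integral_rpow (Or.inr ⟨by intro h; linarith, h0⟩)]
      rw [show M - K - 1 + 1 = M - K from by ring, Real.one_rpow]
    simp only [hg2_def]
    rw [integral_const_mul, hval]
    have haMK : a ^ (M - K) = (1 + x) ^ (K - M) := by
      rw [hapow]; congr 1; ring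
    rw [haMK]
    have hle : (1 - (1 + x) ^ (K - M)) / (M - K) ≤ (1 + x) ^ (K - M) / (K - M) := by
      have h1 : (1:ℝ) ≤ (1 + x) ^ (K - M) := Real.one_le_rpow hx1 (by linarith)
      have e : (1 - (1 + x) ^ (K - M)) / (M - K)
          = ((1 + x) ^ (K - M) - 1) / (K - M) := by
        rw [div_eq_div_iff (ne_of_lt (by linarith : M - K < 0)) (ne_of_gt hKM)]
        ring
      rw [e, div_le_div_iff₀ hKM hKM]
      nlinarith
    have hKpos : (0:ℝ) ≤ (1 + x) ^ (-K) := Real.rpow_nonneg hx0.le _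
    calc (1 + x) ^ (-K) * ((1 - (1 + x) ^ (K - M)) / (M - K))
        ≤ (1 + x) ^ (-K) * ((1 + x) ^ (K - M) / (K - M)) := by
          exact mul_le_mul_of_nonneg_left hle hKpos
      _ = (1 + x) ^ (-M) / (K - M) := by
          rw [mul_div_assoc', ← Real.rpow_add hx0]
          congr 2
          ring
  have I3 : (∫ s in Set.Ioi (1 : ℝ), g3 s) ≤ (1 + x) ^ (-M) / τ := by
    simp only [hg3_def]
    rw [integral_const_mul, integral_Ioi_rpow_of_lt (by linarith : -τ - 1 < -1) one_pos]
    have : -(1:ℝ) ^ (-τ - 1 + 1) / (-τ - 1 + 1) = 1 / τ := by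
      rw [show -τ - 1 + 1 = -τ by ring, Real.one_rpow]
      field_simp
    rw [this]
    have hKM : (1 + x) ^ (-K) ≤ (1 + x) ^ (-M) :=
      Real.rpow_le_rpow_of_exponent_le hx1 (by linarith)
    calc (1 + x) ^ (-K) * (1 / τ) ≤ (1 + x) ^ (-M) * (1 / τ) := by
          exact mul_le_mul_of_nonneg_right hKM (by positivity)
      _ = (1 + x) ^ (-M) / τ := by ring
  calc (∫ s in Set.Ioc (0 : ℝ) a, g1 s) + (∫ s in Set.Ioc a (1 : ℝ), g2 s)
        + (∫ s in Set.Ioi (1 : ℝ), g3 s)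
      ≤ (1 + x) ^ (-M) / M + (1 + x) ^ (-M) / (K - M) + (1 + x) ^ (-M) / τ := by
        rw [I1]; exact add_le_add (add_le_add le_rfl I2) I3
    _ = (1 / M + 1 / (K - M) + 1 / τ) * (1 + x) ^ (-M) := by ring
end

section
/- Let $n, N \ge 1$, $1 < q < \infty$, $M, \tau > 0$, $K > M$ and $C > 0$. Let $(A_s)_{s > 0}$ be a family of bounded linear operators on $L^q(\mathbb{R}^n, \mathbb{C}^N)$ such that $s \mapsto A_s u$ is strongly measurable for each $u$, and such that for all $s > 0$, all Borel sets $E, F \subseteq \mathbb{R}^n$ and all $u \in L^q$: $\|\chi_F A_s(\chi_E u)\|_{L^q} \le C \left(1 + \frac{d(E,F)}{s}\right)^{-K} \|\chi_E u\|_{L^q}$. Let $t \ge r > 0$ and let $m : (0,\infty) \to \mathbb{C}$ be measurable with $|m(s)| \le \min\!\left(\left(\frac{r}{s}\right)^M, 1\right) \cdot \min\!\left(1, \left(\frac{s}{t}\right)^\tau\right)$ for all $s > 0$. Then for every $u \in L^q$ the Bochner integral $T u := \int_0^\infty m(s)\, A_s u\, \frac{ds}{s}$ converges in $L^q$, and there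 is a constant $C'$ depending only on $M, \tau, K, C$ such that for all Borel sets $E, F \subseteq \mathbb{R}^n$ and all $u \in L^q$: $\|\chi_F T(\chi_E u)\|_{L^q} \le C' \left(1 + \frac{d(E,F)}{r}\right)^{-M} \|\chi_E u\|_{L^q}$. -/
open MeasureTheory ENNReal

/-- Multiplication of an element of `L^p` by the indicator function of a measurable set. -/
noncomputable def indLp {α : Type*} [MeasurableSpace α] {μ : Measure α}
    {E : Type*} [NormedAddCommGroup E] {p : ℝ≥0∞}
    {S : Set α} (hS : MeasurableSet S) (u : Lp E p μ) : Lp E p μ :=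
  MeasureTheory.MemLp.toLp (S.indicator u) ((MeasureTheory.Lp.memLp u).indicator hS)

lemma setDist_nonneg' {α : Type*} [PseudoMetricSpace α] (E F : Set α) : 0 ≤ setDist E F :=
  Real.sInf_nonneg fun x hx => by
    obtain ⟨a, -, b, -, rfl⟩ := hx
    exact dist_nonneg

open Set in
lemma scalar_bound {M τ K : ℝ} (hM : 0 < M) (hτ : 0 < τ) (hK : M < K)
    {r t d : ℝ} (hr : 0 < r) (hrt : r ≤ t) (hd : 0 ≤ d) :
    IntegrableOn (fun s : ℝ => min ((r/s)^M) 1 * min 1 ((s/t)^τ) * (1 + d/s)^(-K) / s)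
      (Set.Ioi 0) ∧
    (∫ s in Set.Ioi (0:ℝ), min ((r/s)^M) 1 * min 1 ((s/t)^τ) * (1 + d/s)^(-K) / s) ≤
      (1/τ + 1/(K-M) + 1/M) * (1 + d/r)^(-M) := by
  have ht : 0 < t := lt_of_lt_of_le hr hrt
  have hKM : 0 < K - M := sub_pos.mpr hK
  set g : ℝ → ℝ := fun s => min ((r/s)^M) 1 * min 1 ((s/t)^τ) * (1 + d/s)^(-K) / s with hg
  have hrd : 0 < r + d := by linarith
  have hP1 : (1:ℝ) ≤ 1 + d/r := by
    have : 0 ≤ d / r := div_nonneg hd hr.le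
    linarith
  -- nonnegativity
  have h0 : ∀ s ∈ Ioi (0:ℝ), 0 ≤ g s := by
    intro s hs
    have hs0 : 0 < s := hs
    have h1 : 0 ≤ min ((r/s)^M) 1 := le_min (Real.rpow_nonneg (by positivity) _) zero_le_one
    have h2 : 0 ≤ min 1 ((s/t)^τ) := le_min zero_le_one (Real.rpow_nonneg (by positivity) _)
    have h3 : 0 ≤ (1 + d/s)^(-K) := Real.rpow_nonneg (by positivity) _
    exact div_nonneg (mul_nonneg (mul_nonneg h1 h2) h3) hs0.le
  -- measurability
  have hgm : Measurable g := by
    apply Measurable.div _ measurable_id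
    apply Measurable.mul
    apply Measurable.mul
    · exact ((measurable_const.div measurable_id).pow measurable_const).min measurable_const
    · exact measurable_const.min ((measurable_id.div measurable_const).pow measurable_const)
    · exact (measurable_const.add (measurable_const.div measurable_id)).pow measurable_const
  -- pointwise bounds
  have hb1 : ∀ s ∈ Ioc (0:ℝ) r, g s ≤ ((1+d/r)^(-M) * r^(-τ)) * s^(τ-1) := by
    intro s hs
    obtain ⟨hs0, hsr⟩ := hs
    have e1 : min ((r/s)^M) 1 ≤ 1 := min_le_right _ _
    have e2 : min 1 ((s/t)^τ) ≤ (s/r)^τ := by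
      have h1 : s / t ≤ s / r := by gcongr
      have h2 : (s/t)^τ ≤ (s/r)^τ := Real.rpow_le_rpow (by positivity) h1 hτ.le
      exact le_trans (min_le_right _ _) h2
    have e3 : (1 + d/s)^(-K) ≤ (1+d/r)^(-M) := by
      have h1 : (1:ℝ) + d/r ≤ 1 + d/s := by gcongr
      have h2 : (1 + d/s)^(-K) ≤ (1 + d/r)^(-K) :=
        Real.rpow_le_rpow_of_nonpos (by positivity) h1 (by linarith)
      have h3 : (1 + d/r)^(-K) ≤ (1 + d/r)^(-M) :=
        Real.rpow_le_rpow_of_exponent_le hP1 (by linarith)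
      exact h2.trans h3
    have key : 1 * (s/r)^τ * ((1+d/r)^(-M)) / s = ((1+d/r)^(-M) * r^(-τ)) * s^(τ-1) := by
      rw [one_mul, Real.div_rpow hs0.le hr.le, Real.rpow_sub hs0, Real.rpow_one,
        Real.rpow_neg hr.le]
      field_simp
    have step : g s ≤ 1 * (s/r)^τ * ((1+d/r)^(-M)) / s := by
      have h2 : 0 ≤ min 1 ((s/t)^τ) := le_min zero_le_one (Real.rpow_nonneg (by positivity) _)
      have h3 : 0 ≤ (1 + d/s)^(-K) := Real.rpow_nonneg (by positivity) _
      simp only [hg]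
      gcongr
    exact step.trans_eq key
  have hb2 : ∀ s ∈ Ioc r (r+d), g s ≤ (r^M * (r+d)^(-K)) * s^(K-M-1) := by
    intro s hs
    obtain ⟨hrs, hsrd⟩ := hs
    have hs0 : 0 < s := hr.trans hrs
    have e2 : min 1 ((s/t)^τ) ≤ 1 := min_le_left _ _
    have e3 : (1 + d/s)^(-K) ≤ (s/(r+d))^K := by
      have h1 : (1:ℝ) + d/s = (s+d)/s := by field_simp
      have h2 : ((s+d)/s)^(-K) = (s/(s+d))^K := by
        rw [Real.rpow_neg (by positivity), ← Real.inv_rpow (by positivity), inv_div]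
      have h3 : (s/(s+d))^K ≤ (s/(r+d))^K := by
        have : s/(s+d) ≤ s/(r+d) := by gcongr
        exact Real.rpow_le_rpow (by positivity) this (by linarith)
      rw [h1, h2]; exact h3
    have key : (r/s)^M * 1 * ((s/(r+d))^K) / s = (r^M * (r+d)^(-K)) * s^(K-M-1) := by
      rw [mul_one, Real.div_rpow hr.le hs0.le, Real.div_rpow hs0.le hrd.le,
        Real.rpow_neg hrd.le,
        show (K - M - 1 : ℝ) = K - (M + 1) by ring, Real.rpow_sub hs0,
        Real.rpow_add hs0, Real.rpow_one]
      field_simp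
    have step : g s ≤ (r/s)^M * 1 * ((s/(r+d))^K) / s := by
      have h1 : 0 ≤ (r/s)^M := Real.rpow_nonneg (by positivity) _
      have h2 : 0 ≤ min 1 ((s/t)^τ) := le_min zero_le_one (Real.rpow_nonneg (by positivity) _)
      have h3 : 0 ≤ (1 + d/s)^(-K) := Real.rpow_nonneg (by positivity) _
      have e1 : min ((r/s)^M) 1 ≤ (r/s)^M := min_le_left _ _
      simp only [hg]
      gcongr
    exact step.trans_eq key
  have hb3 : ∀ s ∈ Ioi (r+d), g s ≤ r^M * s^(-M-1) := by
    intro s hs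
    have hs0 : 0 < s := hrd.trans hs
    have e2 : min 1 ((s/t)^τ) ≤ 1 := min_le_left _ _
    have e3 : (1 + d/s)^(-K) ≤ 1 := by
      have h1 : (1:ℝ) ≤ 1 + d/s := by
        have : 0 ≤ d / s := div_nonneg hd hs0.le
        linarith
      exact Real.rpow_le_one_of_one_le_of_nonpos h1 (by linarith)
    have key : (r/s)^M * 1 * 1 / s = r^M * s^(-M-1) := by
      rw [mul_one, mul_one, Real.div_rpow hr.le hs0.le,
        show (-M - 1 : ℝ) = -(M + 1) by ring, Real.rpow_neg hs0.le,
        Real.rpow_add hs0, Real.rpow_one]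
      field_simp
    have step : g s ≤ (r/s)^M * 1 * 1 / s := by
      have h1 : 0 ≤ (r/s)^M := Real.rpow_nonneg (by positivity) _
      have h2 : 0 ≤ min 1 ((s/t)^τ) := le_min zero_le_one (Real.rpow_nonneg (by positivity) _)
      have h3 : 0 ≤ (1 + d/s)^(-K) := Real.rpow_nonneg (by positivity) _
      have e1 : min ((r/s)^M) 1 ≤ (r/s)^M := min_le_left _ _
      simp only [hg]
      gcongr
    exact step.trans_eq key
  -- integrable majorants
  have hmaj1 : IntegrableOn (fun s : ℝ => ((1+d/r)^(-M) * r^(-τ)) * s^(τ-1)) (Ioc 0 r) :=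
    (intervalIntegral.intervalIntegrable_rpow' (by linarith)).1.const_mul _
  have hmaj2 : IntegrableOn (fun s : ℝ => (r^M * (r+d)^(-K)) * s^(K-M-1)) (Ioc r (r+d)) :=
    (intervalIntegral.intervalIntegrable_rpow' (by linarith)).1.const_mul _
  have hmaj3 : IntegrableOn (fun s : ℝ => r^M * s^(-M-1)) (Ioi (r+d)) :=
    (integrableOn_Ioi_rpow_of_lt (by linarith) hrd).const_mul _
  -- integrability of g on each piece
  have hint : ∀ (S : Set ℝ) (hSm : MeasurableSet S) (hSsub : S ⊆ Ioi 0) (maj : ℝ → ℝ),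
      IntegrableOn maj S → (∀ s ∈ S, g s ≤ maj s) → IntegrableOn g S := by
    intro S hSm hSsub maj hmaj hle
    refine Integrable.mono' hmaj (hgm.aestronglyMeasurable) ?_
    rw [ae_restrict_iff' hSm]
    exact ae_of_all _ fun s hs => by
      rw [Real.norm_eq_abs, abs_of_nonneg (h0 s (hSsub hs))]; exact hle s hs
  have hi1 : IntegrableOn g (Ioc 0 r) :=
    hint _ measurableSet_Ioc (fun x hx => hx.1) _ hmaj1 hb1
  have hi2 : IntegrableOn g (Ioc r (r+d)) :=
    hint _ measurableSet_Ioc (fun x hx => hr.trans hx.1) _ hmaj2 hb2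
  have hi3 : IntegrableOn g (Ioi (r+d)) :=
    hint _ measurableSet_Ioi (fun x hx => hrd.trans hx) _ hmaj3 hb3
  have hsplit2 : Ioc r (r+d) ∪ Ioi (r+d) = Ioi r := Set.Ioc_union_Ioi_eq_Ioi (by linarith)
  have hsplit1 : Ioc (0:ℝ) r ∪ Ioi r = Ioi 0 := Set.Ioc_union_Ioi_eq_Ioi hr.le
  have hi23 : IntegrableOn g (Ioi r) := by rw [← hsplit2]; exact hi2.union hi3
  have hiall : IntegrableOn g (Ioi 0) := by rw [← hsplit1]; exact hi1.union hi23
  refine ⟨hiall, ?_⟩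
  have hdisj2 : Disjoint (Ioc r (r+d)) (Ioi (r+d)) :=
    Set.disjoint_left.mpr fun x hx hx' => absurd hx.2 (not_le.mpr hx')
  have hdisj1 : Disjoint (Ioc (0:ℝ) r) (Ioi r) :=
    Set.disjoint_left.mpr fun x hx hx' => absurd hx.2 (not_le.mpr hx')
  have hI : (∫ s in Ioi (0:ℝ), g s) =
      (∫ s in Ioc (0:ℝ) r, g s) + ((∫ s in Ioc r (r+d), g s) + (∫ s in Ioi (r+d), g s)) := by
    rw [← hsplit1, setIntegral_union hdisj1 measurableSet_Ioi hi1 hi23, ← hsplit2,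
      setIntegral_union hdisj2 measurableSet_Ioi hi2 hi3]
  -- piece integrals
  have hv1 : (∫ s in Ioc (0:ℝ) r, ((1+d/r)^(-M) * r^(-τ)) * s^(τ-1)) = (1+d/r)^(-M) / τ := by
    rw [MeasureTheory.integral_const_mul, ← intervalIntegral.integral_of_le hr.le,
      integral_rpow (Or.inl (by linarith))]
    rw [Real.zero_rpow (by linarith : τ - 1 + 1 ≠ 0), sub_zero, show τ - 1 + 1 = τ by ring,
      Real.rpow_neg hr.le]
    field_simp [(Real.rpow_pos_of_pos hr τ).ne']
    try ring
  have hv2 : (∫ s in Ioc r (r+d), (r^M * (r+d)^(-K)) * s^(K-M-1)) ≤ (1+d/r)^(-M) / (K-M) := by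
    rw [MeasureTheory.integral_const_mul, ← intervalIntegral.integral_of_le (by linarith),
      integral_rpow (Or.inl (by linarith)), show K - M - 1 + 1 = K - M by ring]
    have hkey : r^M * (r+d)^(-K) * ((r+d)^(K-M) / (K-M)) = (1+d/r)^(-M) / (K-M) := by
      have h1 : (1:ℝ) + d/r = (r+d)/r := by field_simp
      rw [h1, Real.div_rpow hrd.le hr.le, Real.rpow_neg hrd.le, Real.rpow_neg hrd.le,
        Real.rpow_neg hr.le, Real.rpow_sub hrd]
      field_simp
      try ring
    have hstep : r^M * (r+d)^(-K) * (((r+d)^(K-M) - r^(K-M)) / (K-M)) ≤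
        r^M * (r+d)^(-K) * ((r+d)^(K-M) / (K-M)) := by
      gcongr
      have : 0 ≤ r^(K-M) := Real.rpow_nonneg hr.le _
      linarith
    exact hstep.trans_eq hkey
  have hv3 : (∫ s in Ioi (r+d), r^M * s^(-M-1)) = (1+d/r)^(-M) / M := by
    rw [MeasureTheory.integral_const_mul, integral_Ioi_rpow_of_lt (by linarith) hrd,
      show (-M - 1 + 1 : ℝ) = -M by ring]
    have h1 : (1:ℝ) + d/r = (r+d)/r := by field_simp
    rw [h1, Real.div_rpow hrd.le hr.le, Real.rpow_neg hrd.le, Real.rpow_neg hr.le]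
    field_simp
    try ring
  have p1 : (∫ s in Ioc (0:ℝ) r, g s) ≤ (1+d/r)^(-M) / τ := by
    rw [← hv1]; exact setIntegral_mono_on hi1 hmaj1 measurableSet_Ioc hb1
  have p2 : (∫ s in Ioc r (r+d), g s) ≤ (1+d/r)^(-M) / (K-M) :=
    le_trans (setIntegral_mono_on hi2 hmaj2 measurableSet_Ioc hb2) hv2
  have p3 : (∫ s in Ioi (r+d), g s) ≤ (1+d/r)^(-M) / M := by
    rw [← hv3]; exact setIntegral_mono_on hi3 hmaj3 measurableSet_Ioi hb3
  have : (1/τ + 1/(K-M) + 1/M) * (1 + d/r)^(-M) =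
      (1+d/r)^(-M)/τ + ((1+d/r)^(-M)/(K-M) + (1+d/r)^(-M)/M) := by ring
  rw [hg] at hI p1 p2 p3 ⊢
  rw [hI, this]
  gcongr <;> linarith
section Ind

variable {α : Type*} [MeasurableSpace α] {μ : Measure α}
    {E : Type*} [NormedAddCommGroup E] [NormedSpace ℂ E] {p : ℝ≥0∞} [Fact (1 ≤ p)]
    {S : Set α}

lemma indLp_norm_le (hS : MeasurableSet S) (u : Lp E p μ) : ‖indLp hS u‖ ≤ ‖u‖ := by
  rw [indLp, Lp.norm_toLp, Lp.norm_def]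
  exact ENNReal.toReal_mono (Lp.eLpNorm_ne_top u) (eLpNorm_indicator_le _)

lemma indLp_univ (u : Lp E p μ) : indLp (MeasurableSet.univ) u = u := by
  rw [indLp, MemLp.toLp_congr _ (Lp.memLp u) (Filter.Eventually.of_forall fun x => by
    simp [Set.indicator_univ])]
  exact Lp.toLp_coeFn u _

/-- Multiplication by an indicator function, as a continuous linear map on `L^p`. -/
noncomputable def indCLM (hS : MeasurableSet S) : Lp E p μ →L[ℂ] Lp E p μ :=
  LinearMap.mkContinuous
    { toFun := indLp hS
      map_add' := fun u v => by
        simp only [indLp]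
        rw [← MemLp.toLp_add]
        refine MemLp.toLp_congr _ _ ?_
        filter_upwards [Lp.coeFn_add u v] with x hx
        simp only [Pi.add_apply]
        by_cases hxS : x ∈ S
        · rw [Set.indicator_of_mem hxS, Set.indicator_of_mem hxS, Set.indicator_of_mem hxS]
          exact hx
        · rw [Set.indicator_of_notMem hxS, Set.indicator_of_notMem hxS,
            Set.indicator_of_notMem hxS]
          simp
      map_smul' := fun c u => by
        simp only [indLp, RingHom.id_apply]
        rw [← MemLp.toLp_const_smul]
        refine MemLp.toLp_congr _ _ ?_
        filter_upwards [Lp.coeFn_smul c u] with x hx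
        simp only [Pi.smul_apply]
        by_cases hxS : x ∈ S
        · rw [Set.indicator_of_mem hxS, Set.indicator_of_mem hxS]
          exact hx
        · rw [Set.indicator_of_notMem hxS, Set.indicator_of_notMem hxS]
          simp }
    1 (fun u => by simpa using indLp_norm_le hS u)

@[simp] lemma indCLM_apply (hS : MeasurableSet S) (u : Lp E p μ) :
    indCLM hS u = indLp hS u := rfl

end Ind

set_option maxHeartbeats 1000000 in
/-- Abstract form of Claim 3.9: if a strongly measurable family `(A_s)_{s>0}`
of bounded operators on `L^q(ℝ^n, ℂ^N)` satisfies off-diagonal estimates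
`‖χ_F A_s (χ_E u)‖ ≤ C (1 + d(E,F)/s)^{-K}‖χ_E u‖` of order `K > M`, and
`|m(s)| ≤ min((r/s)^M, 1) · min(1, (s/t)^τ)` with `t ≥ r > 0`, `τ > 0`, then
`T u = ∫₀^∞ m(s) A_s u ds/s` converges in `L^q` and satisfies
`‖χ_F T (χ_E u)‖ ≤ C' (1 + d(E,F)/r)^{-M} ‖χ_E u‖` with `C'` depending only on `M, τ, K, C`. -/
theorem stmt10 (M τ K C : ℝ) (hM : 0 < M) (hτ : 0 < τ) (hK : M < K) (hC : 0 < C) :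
    ∃ C' : ℝ, 0 < C' ∧
      ∀ (n N : ℕ), 1 ≤ n → 1 ≤ N → ∀ (q : ℝ≥0∞) [Fact (1 ≤ q)], 1 < q → q ≠ ⊤ →
      ∀ (A : ℝ →
        (Lp (EuclideanSpace ℂ (Fin N)) q (volume : Measure (EuclideanSpace ℝ (Fin n))) →L[ℂ]
          Lp (EuclideanSpace ℂ (Fin N)) q (volume : Measure (EuclideanSpace ℝ (Fin n))))),
      (∀ u, AEStronglyMeasurable (fun s => A s u) (volume.restrict (Set.Ioi (0 : ℝ)))) →
      (∀ s : ℝ, 0 < s → ∀ (E F : Set (EuclideanSpace ℝ (Fin n)))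
          (hE : MeasurableSet E) (hF : MeasurableSet F), ∀ u,
        ‖indLp hF (A s (indLp hE u))‖ ≤ C * (1 + setDist E F / s) ^ (-K) * ‖indLp hE u‖) →
      ∀ (t r : ℝ), 0 < r → r ≤ t → ∀ (m : ℝ → ℂ), Measurable m →
      (∀ s : ℝ, 0 < s → ‖m s‖ ≤ min ((r / s) ^ M) 1 * min 1 ((s / t) ^ τ)) →
      (∀ u, Integrable (fun s => (m s / (s : ℂ)) • A s u)
          (volume.restrict (Set.Ioi (0 : ℝ)))) ∧
      ∀ (E F : Set (EuclideanSpace ℝ (Fin n)))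
          (hE : MeasurableSet E) (hF : MeasurableSet F), ∀ u,
        ‖indLp hF (∫ s in Set.Ioi (0 : ℝ), (m s / (s : ℂ)) • A s (indLp hE u))‖ ≤
          C' * (1 + setDist E F / r) ^ (-M) * ‖indLp hE u‖ := by
  have hKM : 0 < K - M := sub_pos.mpr hK
  have hcsum : 0 < 1/τ + 1/(K-M) + 1/M :=
    add_pos (add_pos (one_div_pos.mpr hτ) (one_div_pos.mpr hKM)) (one_div_pos.mpr hM)
  refine ⟨C * (1/τ + 1/(K-M) + 1/M), mul_pos hC hcsum, ?_⟩
  intro n N hn hN q hFq hq1 hqT A hAm hA t r hr hrt m hmm hmb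
  have hsC : AEStronglyMeasurable (fun s : ℝ => (m s / (s:ℂ)))
      (volume.restrict (Set.Ioi (0:ℝ))) :=
    (hmm.div Complex.measurable_ofReal).aestronglyMeasurable
  have hnorm_ms : ∀ s : ℝ, 0 < s → ‖m s / (s:ℂ)‖ = ‖m s‖ / s := by
    intro s hs
    rw [norm_div, Complex.norm_real, Real.norm_eq_abs, abs_of_pos hs]
  -- uniform operator bound
  have hAu : ∀ s : ℝ, 0 < s → ∀ u, ‖A s u‖ ≤ C * ‖u‖ := by
    intro s hs u
    have h := hA s hs Set.univ Set.univ MeasurableSet.univ MeasurableSet.univ u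
    rw [indLp_univ, indLp_univ] at h
    refine h.trans ?_
    have hd0 : 0 ≤ setDist (Set.univ : Set (EuclideanSpace ℝ (Fin n))) Set.univ :=
      setDist_nonneg' _ _
    have h1 : (1 + setDist (Set.univ : Set (EuclideanSpace ℝ (Fin n))) Set.univ / s) ^ (-K) ≤ 1 := by
      refine Real.rpow_le_one_of_one_le_of_nonpos ?_ (by linarith)
      have : 0 ≤ setDist (Set.univ : Set (EuclideanSpace ℝ (Fin n))) Set.univ / s :=
        div_nonneg hd0 hs.le
      linarith
    have h2 : 0 ≤ (1 + setDist (Set.univ : Set (EuclideanSpace ℝ (Fin n))) Set.univ / s) ^ (-K) :=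
      Real.rpow_nonneg (by positivity) _
    have h3 := mul_le_mul_of_nonneg_right (mul_le_mul_of_nonneg_left h1 hC.le) (norm_nonneg u)
    simpa using h3
  -- integrability
  have hInt : ∀ u : Lp (EuclideanSpace ℂ (Fin N)) q (volume : Measure (EuclideanSpace ℝ (Fin n))),
      Integrable (fun s => (m s / (s : ℂ)) • A s u) (volume.restrict (Set.Ioi (0 : ℝ))) := by
    intro u
    obtain ⟨hgi, -⟩ := scalar_bound hM hτ hK hr hrt (le_refl (0:ℝ))
    refine Integrable.mono' (hgi.const_mul (C * ‖u‖)) (hsC.smul (hAm u)) ?_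
    rw [ae_restrict_iff' measurableSet_Ioi]
    refine Filter.Eventually.of_forall fun s hs => ?_
    have hs0 : 0 < s := hs
    rw [norm_smul, hnorm_ms s hs0]
    have h1 : ‖A s u‖ ≤ C * ‖u‖ := hAu s hs0 u
    have h2 : ‖m s‖ ≤ min ((r/s)^M) 1 * min 1 ((s/t)^τ) := hmb s hs0
    have hmin : 0 ≤ min ((r/s)^M) 1 * min 1 ((s/t)^τ) :=
      mul_nonneg (le_min (Real.rpow_nonneg (div_nonneg hr.le hs0.le) _) zero_le_one)
        (le_min zero_le_one (Real.rpow_nonneg (div_nonneg hs0.le (hr.trans_le hrt).le) _))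
    have hdz : (1 + (0:ℝ)/s)^(-K) = 1 := by rw [zero_div, add_zero, Real.one_rpow]
    calc ‖m s‖ / s * ‖A s u‖
        ≤ (min ((r/s)^M) 1 * min 1 ((s/t)^τ) / s) * (C * ‖u‖) := by
          refine mul_le_mul ?_ h1 (norm_nonneg _) ?_
          · gcongr
          · exact div_nonneg hmin hs0.le
      _ = C * ‖u‖ * (min ((r/s)^M) 1 * min 1 ((s/t)^τ) * (1 + 0/s)^(-K) / s) := by
          rw [hdz]; ring
  refine ⟨hInt, ?_⟩
  intro E F hE hF u
  have hd0 : 0 ≤ setDist E F := setDist_nonneg' E F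
  set d := setDist E F with hdd
  set v := indLp hE u with hv
  obtain ⟨hgi, hgb⟩ := scalar_bound hM hτ hK hr hrt hd0
  have hfi : Integrable (fun s => (m s / (s : ℂ)) • A s v)
      (volume.restrict (Set.Ioi (0 : ℝ))) := hInt v
  have hcomm : indLp hF (∫ s in Set.Ioi (0:ℝ), (m s / (s:ℂ)) • A s v) =
      ∫ s in Set.Ioi (0:ℝ), indCLM hF ((m s / (s:ℂ)) • A s v) := by
    rw [← indCLM_apply]
    exact ((indCLM hF).integral_comp_comm hfi).symm
  rw [hcomm]
  have hmaj : Integrable (fun s : ℝ =>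
      (C * ‖v‖) * (min ((r/s)^M) 1 * min 1 ((s/t)^τ) * (1 + d/s)^(-K) / s))
      (volume.restrict (Set.Ioi (0:ℝ))) := hgi.const_mul _
  have hae : ∀ᵐ s ∂(volume.restrict (Set.Ioi (0:ℝ))),
      ‖indCLM hF ((m s / (s:ℂ)) • A s v)‖ ≤
      (C * ‖v‖) * (min ((r/s)^M) 1 * min 1 ((s/t)^τ) * (1 + d/s)^(-K) / s) := by
    rw [ae_restrict_iff' measurableSet_Ioi]
    refine Filter.Eventually.of_forall fun s hs => ?_
    have hs0 : 0 < s := hs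
    rw [(indCLM hF).map_smul, norm_smul, hnorm_ms s hs0, indCLM_apply]
    have h1 : ‖indLp hF (A s v)‖ ≤ C * (1 + d/s)^(-K) * ‖v‖ := hA s hs0 E F hE hF u
    have h2 : ‖m s‖ ≤ min ((r/s)^M) 1 * min 1 ((s/t)^τ) := hmb s hs0
    have hmin : 0 ≤ min ((r/s)^M) 1 * min 1 ((s/t)^τ) :=
      mul_nonneg (le_min (Real.rpow_nonneg (div_nonneg hr.le hs0.le) _) zero_le_one)
        (le_min zero_le_one (Real.rpow_nonneg (div_nonneg hs0.le (hr.trans_le hrt).le) _))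
    have hpow : 0 ≤ (1 + d/s)^(-K) :=
      Real.rpow_nonneg (by positivity) _
    calc ‖m s‖ / s * ‖indLp hF (A s v)‖
        ≤ (min ((r/s)^M) 1 * min 1 ((s/t)^τ) / s) * (C * (1 + d/s)^(-K) * ‖v‖) := by
          refine mul_le_mul ?_ h1 (norm_nonneg _) ?_
          · gcongr
          · exact div_nonneg hmin hs0.le
      _ = (C * ‖v‖) * (min ((r/s)^M) 1 * min 1 ((s/t)^τ) * (1 + d/s)^(-K) / s) := by ring
  calc ‖∫ s in Set.Ioi (0:ℝ), indCLM hF ((m s / (s:ℂ)) • A s v)‖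
      ≤ ∫ s in Set.Ioi (0:ℝ),
          (C * ‖v‖) * (min ((r/s)^M) 1 * min 1 ((s/t)^τ) * (1 + d/s)^(-K) / s) :=
        norm_integral_le_of_norm_le hmaj hae
    _ = (C * ‖v‖) * ∫ s in Set.Ioi (0:ℝ),
          min ((r/s)^M) 1 * min 1 ((s/t)^τ) * (1 + d/s)^(-K) / s :=
        MeasureTheory.integral_const_mul _ _
    _ ≤ (C * ‖v‖) * ((1/τ + 1/(K-M) + 1/M) * (1 + d/r)^(-M)) :=
        mul_le_mul_of_nonneg_left hgb (mul_nonneg hC.le (norm_nonneg _))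
    _ = C * (1/τ + 1/(K-M) + 1/M) * (1 + d/r)^(-M) * ‖v‖ := by ring
end
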